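/- arXiv:0906.0717 — 3 statements merged into one kernel-verified Lean document; each statement's English description precedes it below -/
import Mathlib

section
/- Let t>0, r>0, ρ>0 and θ,ψ∈ℝ with |θ−ψ|<π, and let 0<δ<π−|θ−ψ|. Then the standard planar heat kernel admits the contour integral representation (1/(4πt))·e^{−(r²+ρ²−2rρcos(θ−ψ))/(4t)} = (1/(16π²it))·e^{−(r²+ρ²)/(4t)}·[ ∮_{|α−ψ|=δ} e^{rρcos(α−θ)/(2t)} cot((α−ψ)/2) dα + i∫_{−∞}^{∞} e^{rρcos(θ−π+is−θ)/(2t)} cot((θ−π+is−ψ)/2) ds − i∫_{−∞}^{∞} e^{rρcos(θ+π+is−θ)/(2t)} cot((θ+π+is−ψ)/2) ds ], where the circle is positively oriented; in particular all three integrals converge absolutely. -/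
open MeasureTheory

open Complex Filter Topology Metric


-- sin nonzero on small punctured disc
lemma sin_half_ne_zero {z : ℂ} (hz : z ≠ 0) (hz2 : ‖z‖ < 2 * Real.pi) :
    Complex.sin (z / 2) ≠ 0 := by
  intro h
  obtain ⟨k, hk⟩ := Complex.sin_eq_zero_iff.1 h
  have hzk : z = ((2 * k * Real.pi : ℝ) : ℂ) := by
    push_cast
    rw [div_eq_iff (two_ne_zero)] at hk
    rw [hk]; ring
  rw [hzk, Complex.norm_real, Real.norm_eq_abs] at hz2
  have hk0 : k = 0 := by
    rcases eq_or_ne k 0 with h0 | h0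
    · exact h0
    · exfalso
      have h1 : (1 : ℝ) ≤ |(k : ℝ)| := by
        have := Int.one_le_abs (by exact_mod_cast h0 : k ≠ 0)
        exact_mod_cast this
      have : |2 * (k : ℝ) * Real.pi| = 2 * |(k : ℝ)| * Real.pi := by
        rw [abs_mul, abs_mul, abs_of_pos Real.pi_pos, Nat.abs_ofNat]
      nlinarith [Real.pi_pos]
  apply hz
  rw [hzk, hk0]; push_cast; ring

-- cosh quadratic lower bound
lemma sq_div_le_cosh (s : ℝ) : s ^ 2 / 8 ≤ Real.cosh s := by
  have h1 := Real.add_one_le_exp (|s| / 2)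
  have h2 : Real.exp |s| = Real.exp (|s| / 2) ^ 2 := by
    rw [sq, ← Real.exp_add]; ring_nf
  have h3 : Real.exp |s| / 2 ≤ Real.cosh s := by
    rw [Real.cosh_eq]
    rcases abs_cases s with ⟨h, _⟩ | ⟨h, _⟩ <;> rw [h] <;>
      nlinarith [Real.exp_pos s, Real.exp_pos (-s)]
  nlinarith [abs_nonneg s, _root_.sq_abs s]

-- cot has period π
lemma cot_add_pi (z : ℂ) : Complex.cot (z + ↑Real.pi) = Complex.cot z := by
  simp only [Complex.cot_eq_cos_div_sin, Complex.cos_add, Complex.sin_add,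
    Complex.cos_pi, Complex.sin_pi]
  rw [show Complex.cos z * (-1) - Complex.sin z * 0 = -Complex.cos z by ring,
    show Complex.sin z * (-1) + Complex.cos z * 0 = -Complex.sin z by ring,
    neg_div_neg_eq]

lemma continuousAt_cot {z : ℂ} (h : Complex.sin z ≠ 0) : ContinuousAt Complex.cot z := by
  have : Complex.cot = fun w => Complex.cos w / Complex.sin w :=
    funext fun w => Complex.cot_eq_cos_div_sin w
  rw [this]
  exact (Complex.continuous_cos.continuousAt).div (Complex.continuous_sin.continuousAt) h

lemma differentiableAt_cot {z : ℂ} (h : Complex.sin z ≠ 0) :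
    DifferentiableAt ℂ Complex.cot z := by
  have : Complex.cot = fun w => Complex.cos w / Complex.sin w :=
    funext fun w => Complex.cot_eq_cos_div_sin w
  rw [this]
  exact (Complex.differentiable_cos z).div (Complex.differentiable_sin z) h

noncomputable def pfun : ℂ → ℂ := fun z => if z = 0 then 2 else z * Complex.cot (z / 2)

lemma tendsto_div_sin : Tendsto (fun w : ℂ => w / Complex.sin w) (𝓝[≠] 0) (𝓝 1) := by
  have h := Complex.hasDerivAt_sin 0
  rw [hasDerivAt_iff_tendsto_slope] at h
  have h1 : Tendsto (fun w : ℂ => Complex.sin w / w) (𝓝[≠] (0 : ℂ)) (𝓝 1) := by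
    simpa [slope_fun_def, Complex.sin_zero, Complex.cos_zero, sub_zero, div_eq_inv_mul]
      using h
  have h2 := h1.inv₀ one_ne_zero
  simpa [inv_div] using h2

lemma tendsto_mul_cot : Tendsto (fun z : ℂ => z * Complex.cot (z / 2)) (𝓝[≠] 0) (𝓝 2) := by
  have key : (fun z : ℂ => z * Complex.cot (z / 2)) =
      fun z : ℂ => 2 * Complex.cos (z / 2) * (z / 2 / Complex.sin (z / 2)) := by
    funext z
    rw [Complex.cot_eq_cos_div_sin]
    field_simp
  rw [key]
  have hhalf : Tendsto (fun z : ℂ => z / 2) (𝓝[≠] (0 : ℂ)) (𝓝[≠] (0 : ℂ)) := by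
    rw [tendsto_nhdsWithin_iff]
    constructor
    · have h0 : Tendsto (fun z : ℂ => z / 2) (𝓝 0) (𝓝 0) := by
        simpa using (continuous_id.div_const (2 : ℂ)).tendsto 0
      exact h0.mono_left (nhdsWithin_le_nhds : 𝓝[≠] (0 : ℂ) ≤ 𝓝 0)
    · exact eventually_mem_nhdsWithin.mono fun z hz => div_ne_zero hz two_ne_zero
  have hA : Tendsto (fun z : ℂ => 2 * Complex.cos (z / 2)) (𝓝[≠] (0 : ℂ)) (𝓝 2) := by
    have h0 : ContinuousAt (fun z : ℂ => 2 * Complex.cos (z / 2)) 0 := by fun_prop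
    have h1 := h0.tendsto.mono_left (nhdsWithin_le_nhds : 𝓝[≠] (0 : ℂ) ≤ 𝓝 0)
    simpa using h1
  have hB := tendsto_div_sin.comp hhalf
  have := hA.mul hB
  simpa using this

lemma continuousAt_pfun_zero : ContinuousAt pfun 0 := by
  have h1 : Tendsto pfun (𝓝[≠] (0 : ℂ)) (𝓝 2) := by
    refine tendsto_mul_cot.congr' ?_
    exact eventually_mem_nhdsWithin.mono fun z hz => (if_neg hz).symm
  rw [ContinuousAt, show pfun 0 = 2 from if_pos rfl, ← nhdsNE_sup_pure 0]
  rw [tendsto_sup]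
  refine ⟨h1, ?_⟩
  have := tendsto_pure_nhds pfun 0
  rwa [show pfun 0 = 2 from if_pos rfl] at this

lemma pfun_eq_of_ne {z : ℂ} (hz : z ≠ 0) : pfun z = z * Complex.cot (z / 2) := if_neg hz

lemma differentiableAt_pfun {z : ℂ} (hz : z ≠ 0) (hz2 : ‖z‖ < 2 * Real.pi) :
    DifferentiableAt ℂ pfun z := by
  have hev : (fun w => w * Complex.cot (w / 2)) =ᶠ[𝓝 z] pfun := by
    filter_upwards [isOpen_compl_singleton.mem_nhds hz] with w hw
    exact (pfun_eq_of_ne hw).symm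
  refine DifferentiableAt.congr_of_eventuallyEq ?_ hev.symm
  have hs := sin_half_ne_zero hz hz2
  have hc : DifferentiableAt ℂ (fun w : ℂ => Complex.cot (w / 2)) z :=
    DifferentiableAt.comp (g := Complex.cot) (f := fun w : ℂ => w / 2) z (differentiableAt_cot hs)
      (differentiableAt_id.div_const (2:ℂ))
  exact differentiableAt_id.mul hc

lemma continuousAt_pfun {z : ℂ} (hz2 : ‖z‖ < 2 * Real.pi) : ContinuousAt pfun z := by
  rcases eq_or_ne z 0 with rfl | hz
  · exact continuousAt_pfun_zero
  · exact (differentiableAt_pfun hz hz2).continuousAt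

-- norm of sin on vertical line: lower bound
lemma sin_line_lower (x y : ℝ) :
    |Real.sin x| * Real.cosh y ≤ ‖Complex.sin (↑x + ↑y * Complex.I)‖ := by
  have h : Complex.sin (↑x + ↑y * Complex.I)
      = ↑(Real.sin x * Real.cosh y) + ↑(Real.cos x * Real.sinh y) * Complex.I := by
    rw [Complex.sin_add_mul_I]; push_cast; ring
  rw [h, Complex.norm_add_mul_I]
  have h1 : |Real.sin x| * Real.cosh y =
      Real.sqrt ((Real.sin x * Real.cosh y)^2) := by
    rw [Real.sqrt_sq_eq_abs, abs_mul, abs_of_pos (Real.cosh_pos y)]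
  rw [h1]
  exact Real.sqrt_le_sqrt (by nlinarith [sq_nonneg (Real.cos x * Real.sinh y)])

lemma cos_line_upper (x y : ℝ) :
    ‖Complex.cos (↑x + ↑y * Complex.I)‖ ≤ Real.cosh y := by
  have h : Complex.cos (↑x + ↑y * Complex.I)
      = ↑(Real.cos x * Real.cosh y) + ↑(-(Real.sin x * Real.sinh y)) * Complex.I := by
    rw [Complex.cos_add_mul_I]; push_cast; ring
  rw [h, Complex.norm_add_mul_I]
  refine le_trans (Real.sqrt_le_sqrt ?_) (le_of_eq (Real.sqrt_sq (Real.cosh_pos y).le))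
  nlinarith [Real.sin_sq_add_cos_sq x, Real.cosh_sq y, sq_nonneg (Real.sinh y),
    Real.cosh_pos y]

lemma norm_cot_line (x y : ℝ) (hx : Real.sin x ≠ 0) :
    ‖Complex.cot (↑x + ↑y * Complex.I)‖ ≤ 1 / |Real.sin x| := by
  rw [Complex.cot_eq_cos_div_sin, norm_div]
  have hs := sin_line_lower x y
  have hc := cos_line_upper x y
  have h0 : 0 < |Real.sin x| * Real.cosh y :=
    mul_pos (abs_pos.2 hx) (Real.cosh_pos y)
  calc ‖Complex.cos (↑x + ↑y * Complex.I)‖ / ‖Complex.sin (↑x + ↑y * Complex.I)‖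
      ≤ Real.cosh y / (|Real.sin x| * Real.cosh y) :=
        div_le_div₀ (Real.cosh_pos y).le hc h0 hs
    _ = 1 / |Real.sin x| := by
        rw [mul_comm]; field_simp
section Circle
variable {g : ℂ → ℂ} {c : ℂ} {δ : ℝ}

lemma circleIntegrable_cot (hg : Continuous g) (hδ : 0 < δ) (hδπ : δ < Real.pi) :
    CircleIntegrable (fun z => g z * Complex.cot ((z - c) / 2)) c δ := by
  refine ContinuousOn.circleIntegrable hδ.le ?_
  intro z hz
  have hd : ‖z - c‖ = δ := mem_sphere_iff_norm.1 hz
  have hzc : z - c ≠ 0 := by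
    intro h; rw [h, norm_zero] at hd; exact hδ.ne hd
  have h2 : ‖z - c‖ < 2 * Real.pi := by
    rw [hd]; nlinarith [Real.pi_pos]
  have hs := sin_half_ne_zero hzc h2
  have hsub : ContinuousAt (fun w : ℂ => (w - c) / 2) z :=
    ((continuous_id.sub continuous_const).div_const 2).continuousAt
  exact (hg.continuousAt.mul ((continuousAt_cot hs).comp (x := z) hsub)).continuousWithinAt

lemma circle_residue (hg : Differentiable ℂ g) (hδ : 0 < δ) (hδπ : δ < Real.pi) :
    (∮ z in C(c, δ), g z * Complex.cot ((z - c) / 2)) = 4 * Real.pi * Complex.I * g c := by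
  set h : ℂ → ℂ := fun z => g z * pfun (z - c) with hh
  have hcont : ContinuousOn h (closedBall c δ) := by
    intro z hz
    have hz2 : ‖z - c‖ < 2 * Real.pi := by
      have := mem_closedBall_iff_norm.1 hz
      nlinarith [Real.pi_pos]
    have hsub : ContinuousAt (fun w : ℂ => w - c) z :=
      (continuous_id.sub continuous_const).continuousAt
    exact (hg.continuous.continuousAt.mul
      ((continuousAt_pfun hz2).comp (x := z) hsub)).continuousWithinAt
  have hdiff : ∀ z ∈ Metric.ball c δ \ ({c} : Set ℂ), DifferentiableAt ℂ h z := by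
    rintro z ⟨hz, hz'⟩
    have hzc : z - c ≠ 0 := sub_ne_zero.2 (by simpa using hz')
    have hz2 : ‖z - c‖ < 2 * Real.pi := by
      have := mem_ball_iff_norm.1 hz
      nlinarith [Real.pi_pos]
    exact (hg z).mul ((differentiableAt_pfun hzc hz2).comp z
      (differentiableAt_id.sub (differentiableAt_const c)))
  have hcauchy := Complex.two_pi_I_inv_smul_circleIntegral_sub_inv_smul_of_differentiable_on_off_countable
    (Set.countable_singleton c) (Metric.mem_ball_self hδ) hcont hdiff
  have heq : Set.EqOn (fun z => (z - c)⁻¹ • h z)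
      (fun z => g z * Complex.cot ((z - c) / 2)) (sphere c δ) := by
    intro z hz
    have hd : ‖z - c‖ = δ := mem_sphere_iff_norm.1 hz
    have hzc : z - c ≠ 0 := by
      intro h0; rw [h0, norm_zero] at hd; exact hδ.ne hd
    simp only [smul_eq_mul, hh, pfun_eq_of_ne hzc]
    field_simp
  have := circleIntegral.integral_congr hδ.le heq
  rw [← this]
  have h0 : h c = 2 * g c := by
    simp [hh, pfun, mul_comm]
  have h2pi : (2 * (Real.pi : ℂ) * Complex.I) ≠ 0 := by
    simp [Real.pi_ne_zero, Complex.I_ne_zero, Complex.ofReal_ne_zero]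
  calc (∮ z in C(c, δ), (z - c)⁻¹ • h z)
      = (2 * (Real.pi : ℂ) * Complex.I) *
        ((2 * (Real.pi : ℂ) * Complex.I)⁻¹ • ∮ z in C(c, δ), (z - c)⁻¹ • h z) := by
        rw [smul_eq_mul, ← mul_assoc, mul_inv_cancel₀ h2pi, one_mul]
    _ = (2 * (Real.pi : ℂ) * Complex.I) * h c := by rw [hcauchy]
    _ = 4 * Real.pi * Complex.I * g c := by rw [h0]; ring
end Circle
lemma cos_line_eq (x y : ℝ) : Complex.cos (↑x + ↑y * Complex.I)
    = ↑(Real.cos x * Real.cosh y) + ↑(-(Real.sin x * Real.sinh y)) * Complex.I := by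
  rw [Complex.cos_add_mul_I]; push_cast; ring

lemma line_integrable {a c : ℝ} (ha : 0 < a) (hc : Real.sin c ≠ 0) :
    Integrable (fun s : ℝ =>
      Complex.exp ((-(a * Real.cosh s) : ℝ) : ℂ) *
        Complex.cot (↑c + ↑(s / 2) * Complex.I)) := by
  have hcont : Continuous fun s : ℝ =>
      Complex.exp ((-(a * Real.cosh s) : ℝ) : ℂ) *
        Complex.cot (↑c + ↑(s / 2) * Complex.I) := by
    refine Continuous.mul (by fun_prop) ?_
    rw [continuous_iff_continuousAt]
    intro s
    have hs : Complex.sin (↑c + ↑(s / 2) * Complex.I) ≠ 0 := by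
      intro h
      have hl := sin_line_lower c (s / 2)
      rw [h, norm_zero] at hl
      nlinarith [Real.cosh_pos (s / 2), abs_pos.2 hc]
    have hsub : ContinuousAt (fun s : ℝ => ((c : ℂ) + ↑(s / 2) * Complex.I)) s := by fun_prop
    exact (continuousAt_cot hs).comp (x := s) hsub
  refine ((integrable_exp_neg_mul_sq (show (0:ℝ) < a / 8 by positivity)).const_mul
    (1 / |Real.sin c|)).mono' hcont.aestronglyMeasurable ?_
  refine Filter.Eventually.of_forall fun s => ?_
  rw [norm_mul]
  have h1 : ‖Complex.exp ((-(a * Real.cosh s) : ℝ) : ℂ)‖ = Real.exp (-(a * Real.cosh s)) := by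
    rw [Complex.norm_exp]; simp
  have h2 := norm_cot_line c (s / 2) hc
  have h3 : Real.exp (-(a * Real.cosh s)) ≤ Real.exp (-(a / 8) * s ^ 2) := by
    apply Real.exp_le_exp.2
    nlinarith [sq_div_le_cosh s]
  rw [h1, mul_comm (1 / |Real.sin c|)]
  exact mul_le_mul h3 h2 (norm_nonneg _) (Real.exp_pos _).le

/-- the contour-integral representation of the standard planar heat kernel,
where the contour `C_{θ,ψ}` is the union of a small positively oriented circle centered at
`α = ψ` and the two vertical lines `Re α = θ−π` (traversed upward) and `Re α = θ+π`
(traversed downward); in particular all three integrals converge absolutely. -/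
theorem stmt_1 (t r ρ θ ψ δ : ℝ) (ht : 0 < t) (hr : 0 < r) (hρ : 0 < ρ)
    (hθψ : |θ - ψ| < Real.pi) (hδ : 0 < δ) (hδ' : δ < Real.pi - |θ - ψ|) :
    CircleIntegrable
      (fun α : ℂ =>
        Complex.exp ((r : ℂ) * (ρ : ℂ) * Complex.cos (α - (θ : ℂ)) / (2 * (t : ℂ))) *
          Complex.cot ((α - (ψ : ℂ)) / 2)) (ψ : ℂ) δ ∧
    Integrable (fun s : ℝ =>
      Complex.exp ((r : ℂ) * (ρ : ℂ) *
          Complex.cos (((θ : ℂ) - (Real.pi : ℂ) + Complex.I * (s : ℂ)) - (θ : ℂ)) /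
            (2 * (t : ℂ))) *
        Complex.cot ((((θ : ℂ) - (Real.pi : ℂ) + Complex.I * (s : ℂ)) - (ψ : ℂ)) / 2)) ∧
    Integrable (fun s : ℝ =>
      Complex.exp ((r : ℂ) * (ρ : ℂ) *
          Complex.cos (((θ : ℂ) + (Real.pi : ℂ) + Complex.I * (s : ℂ)) - (θ : ℂ)) /
            (2 * (t : ℂ))) *
        Complex.cot ((((θ : ℂ) + (Real.pi : ℂ) + Complex.I * (s : ℂ)) - (ψ : ℂ)) / 2)) ∧
    (1 / (4 * (Real.pi : ℂ) * (t : ℂ))) *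
        Complex.exp (-((r : ℂ) ^ 2 + (ρ : ℂ) ^ 2 -
            2 * (r : ℂ) * (ρ : ℂ) * ((Real.cos (θ - ψ) : ℝ) : ℂ)) / (4 * (t : ℂ))) =
      (1 / (16 * (Real.pi : ℂ) ^ 2 * Complex.I * (t : ℂ))) *
        Complex.exp (-((r : ℂ) ^ 2 + (ρ : ℂ) ^ 2) / (4 * (t : ℂ))) *
        ((∮ α in C((ψ : ℂ), δ),
            Complex.exp ((r : ℂ) * (ρ : ℂ) * Complex.cos (α - (θ : ℂ)) / (2 * (t : ℂ))) *
              Complex.cot ((α - (ψ : ℂ)) / 2)) +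
          Complex.I * (∫ s : ℝ,
            Complex.exp ((r : ℂ) * (ρ : ℂ) *
                Complex.cos (((θ : ℂ) - (Real.pi : ℂ) + Complex.I * (s : ℂ)) - (θ : ℂ)) /
                  (2 * (t : ℂ))) *
              Complex.cot ((((θ : ℂ) - (Real.pi : ℂ) + Complex.I * (s : ℂ)) - (ψ : ℂ)) / 2)) -
          Complex.I * (∫ s : ℝ,
            Complex.exp ((r : ℂ) * (ρ : ℂ) *
                Complex.cos (((θ : ℂ) + (Real.pi : ℂ) + Complex.I * (s : ℂ)) - (θ : ℂ)) /
                  (2 * (t : ℂ))) *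
              Complex.cot ((((θ : ℂ) + (Real.pi : ℂ) + Complex.I * (s : ℂ)) - (ψ : ℂ)) / 2))) := by
  obtain ⟨h1, h2⟩ := abs_lt.1 hθψ
  have ht' : (t : ℂ) ≠ 0 := Complex.ofReal_ne_zero.2 ht.ne'
  have hπ : (Real.pi : ℂ) ≠ 0 := Complex.ofReal_ne_zero.2 Real.pi_ne_zero
  have hδπ : δ < Real.pi := lt_of_lt_of_le hδ' (by linarith [abs_nonneg (θ - ψ)])
  have ha : 0 < r * ρ / (2 * t) := by positivity
  -- the entire function in the circle integrand
  have hgdiff : Differentiable ℂ fun α : ℂ =>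
      Complex.exp ((r : ℂ) * (ρ : ℂ) * Complex.cos (α - (θ : ℂ)) / (2 * (t : ℂ))) := by
    apply Complex.differentiable_exp.comp
    apply Differentiable.div_const
    exact (differentiable_const _).mul (Complex.differentiable_cos.comp
      (differentiable_id.sub (differentiable_const _)))
  -- circle integrability
  have hCI : CircleIntegrable
      (fun α : ℂ =>
        Complex.exp ((r : ℂ) * (ρ : ℂ) * Complex.cos (α - (θ : ℂ)) / (2 * (t : ℂ))) *
          Complex.cot ((α - (ψ : ℂ)) / 2)) (ψ : ℂ) δ :=
    circleIntegrable_cot hgdiff.continuous hδ hδπ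
  -- rewrite of the first line integrand
  have hsin1 : Real.sin ((θ - Real.pi - ψ) / 2) ≠ 0 := by
    refine (Real.sin_neg_of_neg_of_neg_pi_lt (by linarith) (by linarith)).ne
  have hcosneg : ∀ s : ℝ, Complex.cos (((θ : ℂ) - (Real.pi : ℂ) + Complex.I * (s : ℂ)) - (θ : ℂ))
      = ((-Real.cosh s : ℝ) : ℂ) := by
    intro s
    have h : (((θ : ℂ) - (Real.pi : ℂ) + Complex.I * (s : ℂ)) - (θ : ℂ))
        = ((-Real.pi : ℝ) : ℂ) + (s : ℂ) * Complex.I := by push_cast; ring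
    rw [h, cos_line_eq, Real.cos_neg, Real.cos_pi, Real.sin_neg, Real.sin_pi]
    push_cast
    ring
  have hcospos : ∀ s : ℝ, Complex.cos (((θ : ℂ) + (Real.pi : ℂ) + Complex.I * (s : ℂ)) - (θ : ℂ))
      = ((-Real.cosh s : ℝ) : ℂ) := by
    intro s
    have h : (((θ : ℂ) + (Real.pi : ℂ) + Complex.I * (s : ℂ)) - (θ : ℂ))
        = ((Real.pi : ℝ) : ℂ) + (s : ℂ) * Complex.I := by push_cast; ring
    rw [h, cos_line_eq, Real.cos_pi, Real.sin_pi]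
    push_cast
    ring
  have heq1 : (fun s : ℝ =>
      Complex.exp ((r : ℂ) * (ρ : ℂ) *
          Complex.cos (((θ : ℂ) - (Real.pi : ℂ) + Complex.I * (s : ℂ)) - (θ : ℂ)) /
            (2 * (t : ℂ))) *
        Complex.cot ((((θ : ℂ) - (Real.pi : ℂ) + Complex.I * (s : ℂ)) - (ψ : ℂ)) / 2))
      = fun s : ℝ =>
        Complex.exp ((-(r * ρ / (2 * t) * Real.cosh s) : ℝ) : ℂ) *
          Complex.cot (↑((θ - Real.pi - ψ) / 2) + ↑(s / 2) * Complex.I) := by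
    funext s
    rw [hcosneg s]
    have hA : (r : ℂ) * (ρ : ℂ) * ((-Real.cosh s : ℝ) : ℂ) / (2 * (t : ℂ))
        = ((-(r * ρ / (2 * t) * Real.cosh s) : ℝ) : ℂ) := by
      push_cast
      field_simp
    have hB : ((((θ : ℂ) - (Real.pi : ℂ) + Complex.I * (s : ℂ)) - (ψ : ℂ)) / 2)
        = ↑((θ - Real.pi - ψ) / 2) + ↑(s / 2) * Complex.I := by
      push_cast; ring
    rw [hA, hB]
  have hint1 : Integrable (fun s : ℝ =>
      Complex.exp ((r : ℂ) * (ρ : ℂ) *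
          Complex.cos (((θ : ℂ) - (Real.pi : ℂ) + Complex.I * (s : ℂ)) - (θ : ℂ)) /
            (2 * (t : ℂ))) *
        Complex.cot ((((θ : ℂ) - (Real.pi : ℂ) + Complex.I * (s : ℂ)) - (ψ : ℂ)) / 2)) := by
    rw [heq1]; exact line_integrable ha hsin1
  -- second line integrand equals first
  have hfeq : (fun s : ℝ =>
      Complex.exp ((r : ℂ) * (ρ : ℂ) *
          Complex.cos (((θ : ℂ) + (Real.pi : ℂ) + Complex.I * (s : ℂ)) - (θ : ℂ)) /
            (2 * (t : ℂ))) *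
        Complex.cot ((((θ : ℂ) + (Real.pi : ℂ) + Complex.I * (s : ℂ)) - (ψ : ℂ)) / 2))
      = (fun s : ℝ =>
      Complex.exp ((r : ℂ) * (ρ : ℂ) *
          Complex.cos (((θ : ℂ) - (Real.pi : ℂ) + Complex.I * (s : ℂ)) - (θ : ℂ)) /
            (2 * (t : ℂ))) *
        Complex.cot ((((θ : ℂ) - (Real.pi : ℂ) + Complex.I * (s : ℂ)) - (ψ : ℂ)) / 2)) := by
    funext s
    rw [hcosneg s, hcospos s]
    congr 1
    have h : ((((θ : ℂ) + (Real.pi : ℂ) + Complex.I * (s : ℂ)) - (ψ : ℂ)) / 2)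
        = ((((θ : ℂ) - (Real.pi : ℂ) + Complex.I * (s : ℂ)) - (ψ : ℂ)) / 2) + ↑Real.pi := by
      push_cast; ring
    rw [h, cot_add_pi]
  have hint2 : Integrable (fun s : ℝ =>
      Complex.exp ((r : ℂ) * (ρ : ℂ) *
          Complex.cos (((θ : ℂ) + (Real.pi : ℂ) + Complex.I * (s : ℂ)) - (θ : ℂ)) /
            (2 * (t : ℂ))) *
        Complex.cot ((((θ : ℂ) + (Real.pi : ℂ) + Complex.I * (s : ℂ)) - (ψ : ℂ)) / 2)) := by
    rw [hfeq]; exact hint1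
  refine ⟨hCI, hint1, hint2, ?_⟩
  -- main identity
  rw [hfeq]
  have hcirc := circle_residue (c := (ψ : ℂ)) hgdiff hδ hδπ
  rw [hcirc]
  rw [add_sub_cancel_right]
  have hψθ : Complex.cos ((ψ : ℂ) - (θ : ℂ)) = ((Real.cos (θ - ψ) : ℝ) : ℂ) := by
    rw [show ((ψ : ℂ) - (θ : ℂ)) = ((ψ - θ : ℝ) : ℂ) by push_cast; ring,
      ← Complex.ofReal_cos, show ψ - θ = -(θ - ψ) by ring, Real.cos_neg]
  rw [hψθ]
  have hsum : (-((r : ℂ) ^ 2 + (ρ : ℂ) ^ 2) / (4 * (t : ℂ)))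
      + ((r : ℂ) * (ρ : ℂ) * ((Real.cos (θ - ψ) : ℝ) : ℂ) / (2 * (t : ℂ)))
      = -((r : ℂ) ^ 2 + (ρ : ℂ) ^ 2 -
          2 * (r : ℂ) * (ρ : ℂ) * ((Real.cos (θ - ψ) : ℝ) : ℂ)) / (4 * (t : ℂ)) := by
    field_simp
    ring
  rw [← hsum, Complex.exp_add]
  field_simp [hπ, ht', Complex.I_ne_zero]
  ring
end

section
/- Let t>0, r>0, ρ>0 and θ,ψ∈ℝ with |θ−ψ|<π, and let c>0. Then the Carslaw heat kernel with β=2π coincides with the standard planar heat kernel: (1/(16π²it))·e^{−(r²+ρ²)/(4t)}·∫_{A_θ(c)} e^{rρcos(α−θ)/(2t)}·cot((α−ψ)/2) dα = (1/(4πt))·e^{−(r²+ρ²−2rρcos(θ−ψ))/(4t)}. -/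
open MeasureTheory

/-- The integrand of the Carslaw heat kernel on the cone of angle `β`:
`α ↦ e^{rρ cos(α−θ)/(2t)} · cot(π(α−ψ)/β)`. -/
noncomputable def carslawF (β t r ρ θ ψ : ℝ) (α : ℂ) : ℂ :=
  Complex.exp ((r : ℂ) * (ρ : ℂ) * Complex.cos (α - (θ : ℂ)) / (2 * (t : ℂ))) *
    Complex.cot ((Real.pi : ℂ) * (α - (ψ : ℂ)) / (β : ℂ))

/-- The integral of `f : ℂ → ℂ` over the Carslaw contour `A_θ(c)`.  The upper piece runs
from `θ+π+i∞` down to `θ+π+ic`, horizontally to `θ−π+ic`, then up to `θ−π+i∞`; the lower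
piece runs from `θ−π−i∞` up to `θ−π−ic`, horizontally to `θ+π−ic`, then down to
`θ+π−i∞`. -/
noncomputable def AInt (f : ℂ → ℂ) (θ c : ℝ) : ℂ :=
  (-Complex.I) * (∫ s in Set.Ioi c, f (((θ + Real.pi : ℝ) : ℂ) + (s : ℂ) * Complex.I))
    - (∫ x in (θ - Real.pi)..(θ + Real.pi), f ((x : ℂ) + (c : ℂ) * Complex.I))
    + Complex.I * (∫ s in Set.Ioi c, f (((θ - Real.pi : ℝ) : ℂ) + (s : ℂ) * Complex.I))
    + Complex.I * (∫ s in Set.Iio (-c), f (((θ - Real.pi : ℝ) : ℂ) + (s : ℂ) * Complex.I))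
    + (∫ x in (θ - Real.pi)..(θ + Real.pi), f ((x : ℂ) - (c : ℂ) * Complex.I))
    - Complex.I * (∫ s in Set.Iio (-c), f (((θ + Real.pi : ℝ) : ℂ) + (s : ℂ) * Complex.I))

/-- The Carslaw heat kernel `H_β(r,θ,ρ,ψ;t)` on the cone of angle `β`:
`H_β = (8πβit)⁻¹ e^{−(r²+ρ²)/(4t)} ∫_{A_θ(c)} e^{rρcos(α−θ)/(2t)} cot(π(α−ψ)/β) dα`
(the value of the contour integral is independent of the height `c > 0`; we take `c = 1`). -/
noncomputable def carslawH (β t r θ ρ ψ : ℝ) : ℂ :=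
  (1 / (8 * (Real.pi : ℂ) * (β : ℂ) * Complex.I * (t : ℂ))) *
    Complex.exp (-((r : ℂ) ^ 2 + (ρ : ℂ) ^ 2) / (4 * (t : ℂ))) *
    AInt (carslawF β t r ρ θ ψ) θ 1


section CarslawAux
open Complex Set intervalIntegral MeasureTheory Filter Asymptotics Topology Interval

-- log(-z) = log z - πI for im z > 0
lemma aux_log_neg {z : ℂ} (hz : 0 < z.im) :
    Complex.log (-z) = Complex.log z - Real.pi * Complex.I := by
  apply Complex.ext
  · simp [Complex.log_re]
  · simp [Complex.log_im, Complex.arg_neg_eq_arg_sub_pi_of_im_pos hz]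


-- horizontal segment integral of (z - ψ)⁻¹
lemma aux_horiz (ψ d p q : ℝ) (hd : d ≠ 0) :
    ∫ x in p..q, ((x : ℂ) + (d : ℝ) * Complex.I - ψ)⁻¹ =
      Complex.log ((q : ℂ) - ψ + d * Complex.I) - Complex.log ((p : ℂ) - ψ + d * Complex.I) := by
  have key : ∀ x : ℝ, HasDerivAt (fun x : ℝ => Complex.log ((x : ℂ) - ψ + d * Complex.I))
      (((x : ℂ) + (d : ℝ) * Complex.I - ψ)⁻¹) x := by
    intro x
    have hne : ((x : ℂ) - ψ + d * Complex.I) ∈ Complex.slitPlane := by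
      refine Or.inr ?_
      simp [hd]
    have base : HasDerivAt Complex.log (((x : ℂ) - ψ + d * Complex.I)⁻¹)
        ((x : ℂ) - ψ + d * Complex.I) := Complex.hasDerivAt_log hne
    have inner : HasDerivAt (fun z : ℂ => z - ψ + d * Complex.I) 1 (x : ℂ) := by
      simpa using ((hasDerivAt_id ((x : ℂ))).sub_const (ψ : ℂ)).add_const ((d : ℂ) * Complex.I)
    have := (base.comp (x : ℂ) inner).comp_ofReal
    simpa [mul_one, sub_add_eq_add_sub] using this
  have hcont : IntervalIntegrable (fun x : ℝ => ((x : ℂ) + (d : ℝ) * Complex.I - ψ)⁻¹)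
      MeasureTheory.volume p q := by
    apply Continuous.intervalIntegrable
    apply Continuous.inv₀
    · continuity
    · intro x
      intro h
      apply hd
      have := congrArg Complex.im h
      simpa using this
  simpa using intervalIntegral.integral_eq_sub_of_hasDerivAt (fun x _ => key x) hcont

-- vertical, positive real part b
lemma aux_vert_pos (b c : ℝ) (hb : 0 < b) :
    ∫ y in (-c)..c, ((b : ℂ) + (y : ℂ) * Complex.I)⁻¹ =
      (-Complex.I) * (Complex.log ((b : ℂ) + c * Complex.I) -
        Complex.log ((b : ℂ) - c * Complex.I)) := by
  have key : ∀ y : ℝ, HasDerivAt (fun y : ℝ => (-Complex.I) * Complex.log ((b : ℂ) + (y : ℂ) * Complex.I))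
      (((b : ℂ) + (y : ℂ) * Complex.I)⁻¹) y := by
    intro y
    have hne : ((b : ℂ) + (y : ℂ) * Complex.I) ∈ Complex.slitPlane := Or.inl (by simpa using hb)
    have base : HasDerivAt Complex.log (((b : ℂ) + (y : ℂ) * Complex.I)⁻¹)
        ((b : ℂ) + (y : ℂ) * Complex.I) := Complex.hasDerivAt_log hne
    have inner : HasDerivAt (fun z : ℂ => (b : ℂ) + z * Complex.I) Complex.I (y : ℂ) := by
      simpa using ((hasDerivAt_id ((y : ℂ))).mul_const Complex.I).const_add (b : ℂ)
    have := (((base.comp (y : ℂ) inner)).const_mul (-Complex.I)).comp_ofReal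
    convert this using 1
    · rfl
    · linear_combination ((b : ℂ) + (y : ℂ) * Complex.I)⁻¹ * Complex.I_sq
  have hcont : IntervalIntegrable (fun y : ℝ => ((b : ℂ) + (y : ℂ) * Complex.I)⁻¹)
      MeasureTheory.volume (-c) c := by
    apply Continuous.intervalIntegrable
    apply Continuous.inv₀
    · continuity
    · intro y h
      have := congrArg Complex.re h
      simp at this
      exact absurd this (ne_of_gt hb)
  have := intervalIntegral.integral_eq_sub_of_hasDerivAt (fun y _ => key y) hcont
  rw [this]
  push_cast
  ring_nf

-- vertical, negative real part a
lemma aux_vert_neg (a c : ℝ) (ha : a < 0) :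
    ∫ y in (-c)..c, ((a : ℂ) + (y : ℂ) * Complex.I)⁻¹ =
      (-Complex.I) * (Complex.log (-(a : ℂ) - c * Complex.I) -
        Complex.log (-(a : ℂ) + c * Complex.I)) := by
  have key : ∀ y : ℝ, HasDerivAt
      (fun y : ℝ => (-Complex.I) * Complex.log (-(a : ℂ) - (y : ℂ) * Complex.I))
      (((a : ℂ) + (y : ℂ) * Complex.I)⁻¹) y := by
    intro y
    have hne : (-(a : ℂ) - (y : ℂ) * Complex.I) ∈ Complex.slitPlane := Or.inl (by
      simpa using ha)
    have base : HasDerivAt Complex.log ((-(a : ℂ) - (y : ℂ) * Complex.I)⁻¹)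
        (-(a : ℂ) - (y : ℂ) * Complex.I) := Complex.hasDerivAt_log hne
    have inner : HasDerivAt (fun z : ℂ => -(a : ℂ) - z * Complex.I) (-Complex.I) (y : ℂ) := by
      simpa using (((hasDerivAt_id ((y : ℂ))).mul_const Complex.I).const_sub (-(a : ℂ)))
    have := (((base.comp (y : ℂ) inner)).const_mul (-Complex.I)).comp_ofReal
    convert this using 1
    · rfl
    have h2 : ((a : ℂ) + (y : ℂ) * Complex.I)⁻¹ = -((-(a : ℂ) - (y : ℂ) * Complex.I)⁻¹) := by
      rw [← inv_neg]; ring_nf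
    rw [h2]
    linear_combination (-(-(a : ℂ) - (y : ℂ) * Complex.I)⁻¹) * Complex.I_sq
  have hcont : IntervalIntegrable (fun y : ℝ => ((a : ℂ) + (y : ℂ) * Complex.I)⁻¹)
      MeasureTheory.volume (-c) c := by
    apply Continuous.intervalIntegrable
    apply Continuous.inv₀
    · continuity
    · intro y h
      have := congrArg Complex.re h
      simp at this
      exact absurd this (ne_of_lt ha)
  have := intervalIntegral.integral_eq_sub_of_hasDerivAt (fun y _ => key y) hcont
  rw [this]
  push_cast
  ring_nf

lemma aux_rect_pole (ψ c p q : ℝ) (hc : 0 < c) (hp : p < ψ) (hq : ψ < q) :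
    (∫ x in p..q, ((x : ℂ) + ((-c : ℝ) : ℂ) * Complex.I - ψ)⁻¹)
      - (∫ x in p..q, ((x : ℂ) + ((c : ℝ) : ℂ) * Complex.I - ψ)⁻¹)
      + Complex.I • (∫ y in (-c)..c, (((q : ℝ) : ℂ) + (y : ℂ) * Complex.I - ψ)⁻¹)
      - Complex.I • (∫ y in (-c)..c, (((p : ℝ) : ℂ) + (y : ℂ) * Complex.I - ψ)⁻¹)
      = 2 * Real.pi * Complex.I := by
  have h1 := aux_horiz ψ (-c) p q (by linarith)
  have h2 := aux_horiz ψ c p q (by linarith)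
  have h3 : (∫ y in (-c)..c, (((q : ℝ) : ℂ) + (y : ℂ) * Complex.I - ψ)⁻¹)
      = ∫ y in (-c)..c, (((q - ψ : ℝ) : ℂ) + (y : ℂ) * Complex.I)⁻¹ := by
    apply intervalIntegral.integral_congr; intro y _; push_cast; ring_nf
  have h4 : (∫ y in (-c)..c, (((p : ℝ) : ℂ) + (y : ℂ) * Complex.I - ψ)⁻¹)
      = ∫ y in (-c)..c, (((p - ψ : ℝ) : ℂ) + (y : ℂ) * Complex.I)⁻¹ := by
    apply intervalIntegral.integral_congr; intro y _; push_cast; ring_nf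
  have h5 := aux_vert_pos (q - ψ) c (by linarith)
  have h6 := aux_vert_neg (p - ψ) c (by linarith)
  rw [h1, h2, h3, h4, h5, h6]
  have e1 : Complex.log (-(((p - ψ : ℝ) : ℂ) + c * Complex.I))
      = Complex.log (((p - ψ : ℝ) : ℂ) + c * Complex.I) - Real.pi * Complex.I :=
    aux_log_neg (by simp [hc])
  have e2 : Complex.log (-((-((p - ψ : ℝ) : ℂ)) + c * Complex.I))
      = Complex.log ((-((p - ψ : ℝ) : ℂ)) + c * Complex.I) - Real.pi * Complex.I :=
    aux_log_neg (by simp [hc])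
  have r1 : Complex.log (-((p - ψ : ℝ) : ℂ) - c * Complex.I)
      = Complex.log (((p - ψ : ℝ) : ℂ) + c * Complex.I) - Real.pi * Complex.I := by
    rw [← e1]; ring_nf
  have r2 : Complex.log (((p - ψ : ℝ) : ℂ) - c * Complex.I)
      = Complex.log ((-((p - ψ : ℝ) : ℂ)) + c * Complex.I) - Real.pi * Complex.I := by
    rw [← e2]; ring_nf
  have hqq : ((q : ℂ) - ψ + (-c : ℝ) * Complex.I) = ((q - ψ : ℝ) : ℂ) - c * Complex.I := by
    push_cast; ring
  have hqq2 : ((q : ℂ) - ψ + (c : ℝ) * Complex.I) = ((q - ψ : ℝ) : ℂ) + c * Complex.I := by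
    push_cast; ring
  have hpp : ((p : ℂ) - ψ + (-c : ℝ) * Complex.I) = ((p - ψ : ℝ) : ℂ) - c * Complex.I := by
    push_cast; ring
  have hpp2 : ((p : ℂ) - ψ + (c : ℝ) * Complex.I) = ((p - ψ : ℝ) : ℂ) + c * Complex.I := by
    push_cast; ring
  rw [hqq, hqq2, hpp, hpp2, r1, r2]
  simp only [smul_eq_mul]
  linear_combination (-(Complex.log (((q - ψ : ℝ) : ℂ) + c * Complex.I) -
      Complex.log (((q - ψ : ℝ) : ℂ) - c * Complex.I)) +
      (Complex.log (((p - ψ : ℝ) : ℂ) + c * Complex.I) - Real.pi * Complex.I -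
        Complex.log (-((p - ψ : ℝ) : ℂ) + c * Complex.I))) * Complex.I_sq

-- little-o at the pole
lemma aux_littleO (g : ℂ → ℂ) (hg : Differentiable ℂ g) (ψ : ℝ) :
    Tendsto (fun z : ℂ => (g z * (Complex.cos ((z - ψ) / 2) / Complex.sin ((z - ψ) / 2))
        - 2 * g ψ * (z - ψ)⁻¹) * (z - ψ)) (𝓝[≠] (ψ : ℂ)) (𝓝 0) := by
  have hsin : Tendsto (fun w : ℂ => Complex.sin w / w) (𝓝[≠] (0 : ℂ)) (𝓝 1) := by
    have h := Complex.hasDerivAt_sin 0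
    rw [hasDerivAt_iff_tendsto_slope] at h
    simp only [Complex.cos_zero] at h
    refine h.congr' ?_
    filter_upwards [self_mem_nhdsWithin] with w hw
    simp [slope_def_field]
  have hsin' : Tendsto (fun w : ℂ => w / Complex.sin w) (𝓝[≠] (0 : ℂ)) (𝓝 1) := by
    have := hsin.inv₀ one_ne_zero
    simpa [inv_div] using this
  have hw : Tendsto (fun z : ℂ => (z - ψ) / 2) (𝓝[≠] (ψ : ℂ)) (𝓝[≠] (0 : ℂ)) := by
    rw [tendsto_nhdsWithin_iff]
    constructor
    · have : Tendsto (fun z : ℂ => (z - ψ) / 2) (𝓝 (ψ : ℂ)) (𝓝 (((ψ : ℂ) - ψ) / 2)) :=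
        ((continuous_id.sub continuous_const).div_const 2).tendsto _
      simpa using this.mono_left nhdsWithin_le_nhds
    · filter_upwards [self_mem_nhdsWithin] with z hz
      simp only [mem_compl_iff, mem_singleton_iff] at hz ⊢
      intro h
      apply hz
      have h2 : z - (ψ : ℂ) = 0 := by
        field_simp at h
        simpa using h
      exact sub_eq_zero.mp h2
  have hgψ : Tendsto g (𝓝[≠] (ψ : ℂ)) (𝓝 (g ψ)) :=
    (hg.continuous.tendsto _).mono_left nhdsWithin_le_nhds
  have hcos : Tendsto (fun z : ℂ => Complex.cos ((z - ψ) / 2)) (𝓝[≠] (ψ : ℂ)) (𝓝 1) := by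
    have : Tendsto (fun w : ℂ => Complex.cos w) (𝓝[≠] (0 : ℂ)) (𝓝 1) := by
      simpa using (Complex.continuous_cos.tendsto 0).mono_left nhdsWithin_le_nhds
    exact this.comp hw
  have hratio : Tendsto (fun z : ℂ => ((z - ψ) / 2) / Complex.sin ((z - ψ) / 2))
      (𝓝[≠] (ψ : ℂ)) (𝓝 1) := hsin'.comp hw
  have main : Tendsto (fun z : ℂ =>
      2 * (g z * Complex.cos ((z - ψ) / 2) * (((z - ψ) / 2) / Complex.sin ((z - ψ) / 2)))
        - 2 * g ψ) (𝓝[≠] (ψ : ℂ)) (𝓝 0) := by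
    have := (((hgψ.mul hcos).mul hratio).const_mul (2 : ℂ)).sub
      (tendsto_const_nhds (x := (2 : ℂ) * g ψ))
    simpa using this
  refine main.congr' ?_
  filter_upwards [self_mem_nhdsWithin] with z hz
  simp only [mem_compl_iff, mem_singleton_iff] at hz
  have hzψ : z - (ψ : ℂ) ≠ 0 := sub_ne_zero.mpr hz
  field_simp

/-- The rectangle boundary sum for `f z = g z * cot((z-ψ)/2)` with a `2π`-periodic entire `g`. -/
lemma aux_rect_f (g : ℂ → ℂ) (hg : Differentiable ℂ g)
    (hgper : ∀ z : ℂ, g (z + 2 * Real.pi) = g z) (θ ψ c : ℝ)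
    (hθψ : |θ - ψ| < Real.pi) (hc : 0 < c) :
    (∫ x in (θ - Real.pi)..(θ + Real.pi),
        g ((x : ℂ) + ((-c : ℝ) : ℂ) * Complex.I) *
          (Complex.cos ((((x : ℂ) + ((-c : ℝ) : ℂ) * Complex.I) - ψ) / 2) /
            Complex.sin ((((x : ℂ) + ((-c : ℝ) : ℂ) * Complex.I) - ψ) / 2)))
      - (∫ x in (θ - Real.pi)..(θ + Real.pi),
          g ((x : ℂ) + ((c : ℝ) : ℂ) * Complex.I) *
            (Complex.cos ((((x : ℂ) + ((c : ℝ) : ℂ) * Complex.I) - ψ) / 2) /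
              Complex.sin ((((x : ℂ) + ((c : ℝ) : ℂ) * Complex.I) - ψ) / 2)))
      = 4 * Real.pi * Complex.I * g ψ := by
  have hπ : (0 : ℝ) < Real.pi := Real.pi_pos
  obtain ⟨hψ1, hψ2⟩ := abs_lt.mp hθψ
  have hψl : θ - Real.pi < ψ := by linarith
  have hψr : ψ < θ + Real.pi := by linarith
  -- the function
  set f : ℂ → ℂ := fun z => g z *
    (Complex.cos ((z - ψ) / 2) / Complex.sin ((z - ψ) / 2)) with hfdef
  -- zeros of the sine
  have hsin0 : ∀ z : ℂ, Complex.sin ((z - ψ) / 2) = 0 → ∃ k : ℤ,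
      z = (ψ : ℂ) + 2 * Real.pi * k := by
    intro z hz
    rw [Complex.sin_eq_zero_iff] at hz
    obtain ⟨k, hk⟩ := hz
    exact ⟨k, by linear_combination 2 * hk⟩
  -- differentiability away from sine zeros
  have hfd : ∀ z : ℂ, Complex.sin ((z - ψ) / 2) ≠ 0 → DifferentiableAt ℂ f z := by
    intro z hz
    apply (hg z).mul
    apply DifferentiableAt.div
    · exact (Complex.differentiable_cos _).comp z (by fun_prop)
    · exact (Complex.differentiable_sin _).comp z (by fun_prop)
    · exact hz
  -- h with the pole subtracted
  set h : ℂ → ℂ := fun z => f z - 2 * g ψ * (z - (ψ : ℂ))⁻¹ with hhdef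
  have hψval : h (ψ : ℂ) = 0 := by
    simp [hhdef, hfdef]
  -- the open set U
  set U : Set ℂ := {z : ℂ | Complex.sin ((z - ψ) / 2) ≠ 0} ∪ Metric.ball (ψ : ℂ) 1 with hUdef
  have hsincont : Continuous fun z : ℂ => Complex.sin ((z - ψ) / 2) := by fun_prop
  have hUopen : IsOpen U := by
    apply IsOpen.union
    · exact isOpen_compl_singleton.preimage hsincont
    · exact Metric.isOpen_ball
  -- points of U other than ψ have sin ≠ 0
  have hUs : ∀ z ∈ U, z ≠ (ψ : ℂ) → Complex.sin ((z - ψ) / 2) ≠ 0 := by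
    rintro z (hz | hz) hne
    · exact hz
    · intro h0
      obtain ⟨k, hk⟩ := hsin0 z h0
      have hk0 : k ≠ 0 := by
        intro h
        apply hne
        rw [hk, h]
        simp
      have habs : ‖z - (ψ : ℂ)‖ < 1 := by
        rw [Metric.mem_ball, Complex.dist_eq] at hz
        exact hz
      rw [hk] at habs
      have : ‖(ψ : ℂ) + 2 * Real.pi * k - ψ‖ = 2 * Real.pi * |(k : ℝ)| := by
        have : ((ψ : ℂ) + 2 * Real.pi * k - ψ) = ((2 * Real.pi * k : ℝ) : ℂ) := by push_cast; ring
        rw [this, Complex.norm_real, Real.norm_eq_abs, abs_mul, abs_of_pos (by linarith : (0:ℝ) < 2 * Real.pi)]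
      rw [this] at habs
      have hk1 : (1 : ℝ) ≤ |(k : ℝ)| := by
        rw [← Int.cast_abs]
        exact_mod_cast Int.one_le_abs hk0
      have := Real.pi_gt_three
      nlinarith
  -- h is differentiable on U \ {ψ}
  have hhd : DifferentiableOn ℂ h (U \ {(ψ : ℂ)}) := by
    intro z hz
    apply DifferentiableAt.differentiableWithinAt
    have hne : z ≠ (ψ : ℂ) := hz.2
    apply DifferentiableAt.sub
    · exact hfd z (hUs z hz.1 hne)
    · apply DifferentiableAt.const_mul
      exact (differentiableAt_inv (sub_ne_zero.mpr hne)).comp z (by fun_prop)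
  -- little-o condition
  have ho : (fun z => h z - h (ψ : ℂ)) =o[𝓝[≠] (ψ : ℂ)] fun z => (z - (ψ : ℂ))⁻¹ := by
    rw [hψval]
    simp only [sub_zero]
    rw [Asymptotics.isLittleO_iff_tendsto']
    · refine (aux_littleO g hg ψ).congr fun z => ?_
      simp only [div_inv_eq_mul]
      rfl
    · filter_upwards [self_mem_nhdsWithin] with z hz h0
      exfalso
      simp only [mem_compl_iff, mem_singleton_iff] at hz
      exact (sub_ne_zero.mpr hz) (inv_eq_zero.mp h0)
  -- the updated function
  set ht : ℂ → ℂ := Function.update h (ψ : ℂ) (limUnder (𝓝[≠] (ψ : ℂ)) h) with htdef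
  have hball : DifferentiableOn ℂ ht (Metric.ball (ψ : ℂ) 1) := by
    apply Complex.differentiableOn_update_limUnder_of_isLittleO
      (Metric.ball_mem_nhds _ one_pos) ?_ ho
    exact hhd.mono (fun z hz => ⟨Or.inr hz.1, hz.2⟩)
  have htd : DifferentiableOn ℂ ht U := by
    intro z hz
    by_cases hne : z = (ψ : ℂ)
    · subst hne
      exact ((hball.differentiableAt (Metric.ball_mem_nhds _ one_pos)).differentiableWithinAt)
    · apply DifferentiableAt.differentiableWithinAt
      have hopen : IsOpen (U \ {(ψ : ℂ)}) := hUopen.sdiff isClosed_singleton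
      have hda : DifferentiableAt ℂ h z :=
        (hhd.differentiableAt (hopen.mem_nhds ⟨hz, hne⟩))
      apply hda.congr_of_eventuallyEq
      filter_upwards [isOpen_compl_singleton.mem_nhds (by simpa using hne :
        z ∈ ({(ψ : ℂ)}ᶜ : Set ℂ))] with w hw
      simp only [mem_compl_iff, mem_singleton_iff] at hw
      simp [htdef, Function.update_of_ne hw]
  -- the rectangle is inside U
  have hrectsub : ([[(((θ - Real.pi : ℝ) : ℂ) - c * Complex.I).re,
      (((θ + Real.pi : ℝ) : ℂ) + c * Complex.I).re]] ×ℂ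
      [[(((θ - Real.pi : ℝ) : ℂ) - c * Complex.I).im,
      (((θ + Real.pi : ℝ) : ℂ) + c * Complex.I).im]]) ⊆ U := by
    intro z hz
    by_cases hs : Complex.sin ((z - ψ) / 2) = 0
    · obtain ⟨k, hk⟩ := hsin0 z hs
      rw [Complex.mem_reProdIm] at hz
      obtain ⟨hre, _⟩ := hz
      simp only [Complex.sub_re, Complex.add_re, Complex.ofReal_re, Complex.mul_re,
        Complex.ofReal_im, Complex.I_re, Complex.I_im] at hre
      have hzre : z.re = ψ + 2 * Real.pi * k := by
        have := congrArg Complex.re hk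
        simpa using this
      have hre' : z.re ∈ Set.Icc (θ - Real.pi) (θ + Real.pi) := by
        norm_num at hre
        rwa [Set.uIcc_of_le (by linarith : θ - Real.pi ≤ θ + Real.pi)] at hre
      have hk0 : k = 0 := by
        rcases lt_trichotomy k 0 with hlt | heq | hgt
        · exfalso
          have : (k : ℝ) ≤ -1 := by exact_mod_cast (by omega : k ≤ -1)
          have h1 := hre'.1
          nlinarith
        · exact heq
        · exfalso
          have : (1 : ℝ) ≤ (k : ℝ) := by exact_mod_cast hgt
          have h2 := hre'.2
          nlinarith
      right
      rw [hk, hk0]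
      simpa using one_pos
    · exact Or.inl hs
  -- apply the rectangle theorem
  have rect0 := Complex.integral_boundary_rect_eq_zero_of_differentiableOn ht
    (((θ - Real.pi : ℝ) : ℂ) - c * Complex.I) (((θ + Real.pi : ℝ) : ℂ) + c * Complex.I)
    (htd.mono hrectsub)
  norm_num at rect0
  -- points on segments are harmless
  have hre_ne₁ : ∀ k : ℤ, θ + Real.pi ≠ ψ + 2 * Real.pi * k := by
    intro k hk
    rcases le_or_gt k 0 with hk0 | hk0
    · have : (k : ℝ) ≤ 0 := by exact_mod_cast hk0
      nlinarith
    · have : (1 : ℝ) ≤ (k : ℝ) := by exact_mod_cast hk0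
      nlinarith
  have hre_ne₂ : ∀ k : ℤ, θ - Real.pi ≠ ψ + 2 * Real.pi * k := by
    intro k hk
    rcases le_or_gt 0 k with hk0 | hk0
    · have : (0 : ℝ) ≤ (k : ℝ) := by exact_mod_cast hk0
      nlinarith
    · have : (k : ℝ) ≤ -1 := by exact_mod_cast (by omega : k ≤ -1)
      nlinarith
  -- generic decomposition along a segment
  have decomp : ∀ γ : ℝ → ℂ, Continuous γ → (∀ x : ℝ, γ x ≠ (ψ : ℂ)) →
      (∀ x : ℝ, Complex.sin ((γ x - ψ) / 2) ≠ 0) → ∀ lo hi : ℝ,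
      (∫ x in lo..hi, ht (γ x)) =
        (∫ x in lo..hi, f (γ x)) - 2 * g ψ * ∫ x in lo..hi, (γ x - (ψ : ℂ))⁻¹ := by
    intro γ hγ hne hsin lo hi
    rw [← intervalIntegral.integral_const_mul, ← intervalIntegral.integral_sub]
    · apply intervalIntegral.integral_congr
      intro x _
      simp only [htdef, Function.update_of_ne (hne x), hhdef]
    · apply Continuous.intervalIntegrable
      exact (hg.continuous.comp hγ).mul
        ((Complex.continuous_cos.comp (by fun_prop)).div
          (Complex.continuous_sin.comp (by fun_prop)) hsin)
    · apply Continuous.intervalIntegrable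
      exact continuous_const.mul ((hγ.sub continuous_const).inv₀
        fun x => sub_ne_zero.mpr (hne x))
  -- facts for horizontal segments
  have hhor : ∀ d : ℝ, d ≠ 0 → ∀ x : ℝ,
      ((x : ℂ) + (d : ℂ) * Complex.I) ≠ (ψ : ℂ) ∧
        Complex.sin ((((x : ℂ) + (d : ℂ) * Complex.I) - ψ) / 2) ≠ 0 := by
    intro d hd x
    constructor
    · intro hx
      apply hd
      have := congrArg Complex.im hx
      simpa using this
    · intro hx
      obtain ⟨k, hk⟩ := hsin0 _ hx
      apply hd
      have := congrArg Complex.im hk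
      simpa using this
  have hver : ∀ e : ℝ, (∀ k : ℤ, e ≠ ψ + 2 * Real.pi * k) → ∀ y : ℝ,
      ((e : ℂ) + (y : ℂ) * Complex.I) ≠ (ψ : ℂ) ∧
        Complex.sin ((((e : ℂ) + (y : ℂ) * Complex.I) - ψ) / 2) ≠ 0 := by
    intro e he y
    constructor
    · intro hx
      apply he 0
      have := congrArg Complex.re hx
      simpa using this
    · intro hx
      obtain ⟨k, hk⟩ := hsin0 _ hx
      apply he k
      have := congrArg Complex.re hk
      simpa using this
  -- decompose all four boundary integrals
  have e1 : (∫ x in (θ - Real.pi)..(θ + Real.pi), ht ((x : ℂ) + -((c : ℂ) * Complex.I))) =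
      (∫ x in (θ - Real.pi)..(θ + Real.pi), f ((x : ℂ) + -((c : ℂ) * Complex.I)))
        - 2 * g ψ * ∫ x in (θ - Real.pi)..(θ + Real.pi),
            (((x : ℂ) + -((c : ℂ) * Complex.I)) - (ψ : ℂ))⁻¹ := by
    have := decomp (fun x : ℝ => (x : ℂ) + ((-c : ℝ) : ℂ) * Complex.I) (by fun_prop)
      (fun x => (hhor (-c) (by linarith) x).1) (fun x => (hhor (-c) (by linarith) x).2)
      (θ - Real.pi) (θ + Real.pi)
    push_cast at this
    simpa using this
  have e2 : (∫ x in (θ - Real.pi)..(θ + Real.pi), ht ((x : ℂ) + (c : ℂ) * Complex.I)) =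
      (∫ x in (θ - Real.pi)..(θ + Real.pi), f ((x : ℂ) + (c : ℂ) * Complex.I))
        - 2 * g ψ * ∫ x in (θ - Real.pi)..(θ + Real.pi),
            (((x : ℂ) + (c : ℂ) * Complex.I) - (ψ : ℂ))⁻¹ := by
    have := decomp (fun x : ℝ => (x : ℂ) + (c : ℂ) * Complex.I) (by fun_prop)
      (fun x => (hhor c (by linarith) x).1) (fun x => (hhor c (by linarith) x).2)
      (θ - Real.pi) (θ + Real.pi)
    simpa using this
  have e3 : (∫ y in (-c)..c, ht ((θ : ℂ) + (Real.pi : ℂ) + (y : ℂ) * Complex.I)) =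
      (∫ y in (-c)..c, f ((θ : ℂ) + (Real.pi : ℂ) + (y : ℂ) * Complex.I))
        - 2 * g ψ * ∫ y in (-c)..c,
            (((θ : ℂ) + (Real.pi : ℂ) + (y : ℂ) * Complex.I) - (ψ : ℂ))⁻¹ := by
    have := decomp (fun y : ℝ => ((θ + Real.pi : ℝ) : ℂ) + (y : ℂ) * Complex.I) (by fun_prop)
      (fun y => (hver (θ + Real.pi) hre_ne₁ y).1) (fun y => (hver (θ + Real.pi) hre_ne₁ y).2)
      (-c) c
    push_cast at this
    simpa using this
  have e4 : (∫ y in (-c)..c, ht ((θ : ℂ) - (Real.pi : ℂ) + (y : ℂ) * Complex.I)) =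
      (∫ y in (-c)..c, f ((θ : ℂ) - (Real.pi : ℂ) + (y : ℂ) * Complex.I))
        - 2 * g ψ * ∫ y in (-c)..c,
            (((θ : ℂ) - (Real.pi : ℂ) + (y : ℂ) * Complex.I) - (ψ : ℂ))⁻¹ := by
    have := decomp (fun y : ℝ => ((θ - Real.pi : ℝ) : ℂ) + (y : ℂ) * Complex.I) (by fun_prop)
      (fun y => (hver (θ - Real.pi) hre_ne₂ y).1) (fun y => (hver (θ - Real.pi) hre_ne₂ y).2)
      (-c) c
    push_cast at this
    simpa using this
  rw [e1, e2, e3, e4] at rect0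
  -- periodicity of f
  have hper : ∀ z : ℂ, f (z + 2 * Real.pi) = f z := by
    intro z
    simp only [hfdef]
    have h2 : (z + 2 * (Real.pi : ℂ) - ψ) / 2 = (z - ψ) / 2 + Real.pi := by ring
    rw [h2, Complex.cos_add_pi, Complex.sin_add_pi, neg_div_neg_eq, hgper]
  -- the two vertical f-integrals agree
  have everts : (∫ y in (-c)..c, f ((θ : ℂ) + (Real.pi : ℂ) + (y : ℂ) * Complex.I)) =
      ∫ y in (-c)..c, f ((θ : ℂ) - (Real.pi : ℂ) + (y : ℂ) * Complex.I) := by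
    apply intervalIntegral.integral_congr
    intro y _
    beta_reduce
    have harg : (θ : ℂ) + (Real.pi : ℂ) + (y : ℂ) * Complex.I =
        ((θ : ℂ) - (Real.pi : ℂ) + (y : ℂ) * Complex.I) + 2 * Real.pi := by ring
    rw [harg, hper]
  -- pole boundary integral
  have hpole := aux_rect_pole ψ c (θ - Real.pi) (θ + Real.pi) hc hψl hψr
  have p1 : (∫ x in (θ - Real.pi)..(θ + Real.pi),
      ((x : ℂ) + ((-c : ℝ) : ℂ) * Complex.I - ψ)⁻¹) =
      ∫ x in (θ - Real.pi)..(θ + Real.pi), (((x : ℂ) + -((c : ℂ) * Complex.I)) - (ψ : ℂ))⁻¹ := by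
    apply intervalIntegral.integral_congr; intro x _; push_cast; ring_nf
  have p3 : (∫ y in (-c)..c, (((θ + Real.pi : ℝ) : ℂ) + (y : ℂ) * Complex.I - ψ)⁻¹) =
      ∫ y in (-c)..c, (((θ : ℂ) + (Real.pi : ℂ) + (y : ℂ) * Complex.I) - (ψ : ℂ))⁻¹ := by
    apply intervalIntegral.integral_congr; intro y _; push_cast; ring_nf
  have p4 : (∫ y in (-c)..c, (((θ - Real.pi : ℝ) : ℂ) + (y : ℂ) * Complex.I - ψ)⁻¹) =
      ∫ y in (-c)..c, (((θ : ℂ) - (Real.pi : ℂ) + (y : ℂ) * Complex.I) - (ψ : ℂ))⁻¹ := by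
    apply intervalIntegral.integral_congr; intro y _; push_cast; ring_nf
  rw [p1, p3, p4] at hpole
  simp only [smul_eq_mul] at hpole
  -- match the goal's integrals with rect0's
  have q1 : (∫ x in (θ - Real.pi)..(θ + Real.pi),
      g ((x : ℂ) + ((-c : ℝ) : ℂ) * Complex.I) *
        (Complex.cos ((((x : ℂ) + ((-c : ℝ) : ℂ) * Complex.I) - ψ) / 2) /
          Complex.sin ((((x : ℂ) + ((-c : ℝ) : ℂ) * Complex.I) - ψ) / 2))) =
      ∫ x in (θ - Real.pi)..(θ + Real.pi), f ((x : ℂ) + -((c : ℂ) * Complex.I)) := by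
    apply intervalIntegral.integral_congr; intro x _
    beta_reduce
    have hax : ((x : ℂ) + ((-c : ℝ) : ℂ) * Complex.I) = (x : ℂ) + -((c : ℂ) * Complex.I) := by
      push_cast; ring
    rw [hax]
  have q2 : (∫ x in (θ - Real.pi)..(θ + Real.pi),
      g ((x : ℂ) + ((c : ℝ) : ℂ) * Complex.I) *
        (Complex.cos ((((x : ℂ) + ((c : ℝ) : ℂ) * Complex.I) - ψ) / 2) /
          Complex.sin ((((x : ℂ) + ((c : ℝ) : ℂ) * Complex.I) - ψ) / 2))) =
      ∫ x in (θ - Real.pi)..(θ + Real.pi), f ((x : ℂ) + (c : ℂ) * Complex.I) := by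
    apply intervalIntegral.integral_congr; intro x _; rfl
  rw [q1, q2]
  -- conclude
  rw [everts] at rect0
  linear_combination rect0 + 2 * g ψ * hpole

end CarslawAux

/-- for `β = 2π` (so that the cotangent factor is `cot((α−ψ)/2)` and the
prefactor is `(16π²it)⁻¹`), the Carslaw contour integral over `A_θ(c)` reproduces the
standard planar heat kernel, for any height `c > 0`, provided `|θ−ψ| < π`. -/
theorem stmt_3 (t r ρ θ ψ c : ℝ) (ht : 0 < t) (hr : 0 < r) (hρ : 0 < ρ)
    (hθψ : |θ - ψ| < Real.pi) (hc : 0 < c) :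
    (1 / (16 * (Real.pi : ℂ) ^ 2 * Complex.I * (t : ℂ))) *
        Complex.exp (-((r : ℂ) ^ 2 + (ρ : ℂ) ^ 2) / (4 * (t : ℂ))) *
        AInt (fun α : ℂ =>
          Complex.exp ((r : ℂ) * (ρ : ℂ) * Complex.cos (α - (θ : ℂ)) / (2 * (t : ℂ))) *
            Complex.cot ((α - (ψ : ℂ)) / 2)) θ c =
      (1 / (4 * (Real.pi : ℂ) * (t : ℂ))) *
        Complex.exp (-((r : ℂ) ^ 2 + (ρ : ℂ) ^ 2 -
            2 * (r : ℂ) * (ρ : ℂ) * ((Real.cos (θ - ψ) : ℝ) : ℂ)) / (4 * (t : ℂ))) := by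
  have hπ : (0 : ℝ) < Real.pi := Real.pi_pos
  have ht0 : (t : ℂ) ≠ 0 := by exact_mod_cast ht.ne'
  have hπ0 : ((Real.pi : ℝ) : ℂ) ≠ 0 := by exact_mod_cast hπ.ne'
  set g : ℂ → ℂ := fun z => Complex.exp ((r : ℂ) * (ρ : ℂ) * Complex.cos (z - (θ : ℂ)) /
    (2 * (t : ℂ))) with hgdef
  set fl : ℂ → ℂ := fun α : ℂ =>
    Complex.exp ((r : ℂ) * (ρ : ℂ) * Complex.cos (α - (θ : ℂ)) / (2 * (t : ℂ))) *
      Complex.cot ((α - (ψ : ℂ)) / 2) with hfldef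
  have hg : Differentiable ℂ g := by
    apply Complex.differentiable_exp.comp
    fun_prop
  have hgper : ∀ z : ℂ, g (z + 2 * Real.pi) = g z := by
    intro z
    simp only [hgdef]
    have h1 : z + 2 * (Real.pi : ℂ) - θ = z - θ + 2 * Real.pi := by ring
    rw [h1, Complex.cos_add_two_pi]
  have hper : ∀ z : ℂ, fl (z + 2 * Real.pi) = fl z := by
    intro z
    simp only [hfldef]
    have h1 : z + 2 * (Real.pi : ℂ) - θ = z - θ + 2 * Real.pi := by ring
    have h2 : (z + 2 * (Real.pi : ℂ) - ψ) / 2 = (z - ψ) / 2 + Real.pi := by ring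
    rw [h1, h2, Complex.cos_add_two_pi, Complex.cot_eq_cos_div_sin,
      Complex.cot_eq_cos_div_sin, Complex.cos_add_pi, Complex.sin_add_pi, neg_div_neg_eq]
  -- vertical pieces cancel
  have hU : (fun s : ℝ => fl (((θ + Real.pi : ℝ) : ℂ) + (s : ℂ) * Complex.I)) =
      fun s : ℝ => fl (((θ - Real.pi : ℝ) : ℂ) + (s : ℂ) * Complex.I) := by
    funext s
    have harg : ((θ + Real.pi : ℝ) : ℂ) + (s : ℂ) * Complex.I =
        (((θ - Real.pi : ℝ) : ℂ) + (s : ℂ) * Complex.I) + 2 * Real.pi := by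
      push_cast; ring
    rw [harg, hper]
  have hAInt : AInt fl θ c =
      (∫ x in (θ - Real.pi)..(θ + Real.pi), fl ((x : ℂ) - (c : ℂ) * Complex.I))
        - ∫ x in (θ - Real.pi)..(θ + Real.pi), fl ((x : ℂ) + (c : ℂ) * Complex.I) := by
    rw [AInt, hU]
    ring
  -- identify with the rectangle computation
  obtain ⟨hψ1, hψ2⟩ := abs_lt.mp hθψ
  have k1 : (∫ x in (θ - Real.pi)..(θ + Real.pi), fl ((x : ℂ) - (c : ℂ) * Complex.I)) =
      ∫ x in (θ - Real.pi)..(θ + Real.pi),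
        g ((x : ℂ) + ((-c : ℝ) : ℂ) * Complex.I) *
          (Complex.cos ((((x : ℂ) + ((-c : ℝ) : ℂ) * Complex.I) - ψ) / 2) /
            Complex.sin ((((x : ℂ) + ((-c : ℝ) : ℂ) * Complex.I) - ψ) / 2)) := by
    apply intervalIntegral.integral_congr
    intro x _
    beta_reduce
    have harg : ((x : ℂ) - (c : ℂ) * Complex.I) = (x : ℂ) + ((-c : ℝ) : ℂ) * Complex.I := by
      push_cast; ring
    rw [harg, hfldef]
    beta_reduce
    rw [Complex.cot_eq_cos_div_sin]
  have k2 : (∫ x in (θ - Real.pi)..(θ + Real.pi), fl ((x : ℂ) + (c : ℂ) * Complex.I)) =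
      ∫ x in (θ - Real.pi)..(θ + Real.pi),
        g ((x : ℂ) + ((c : ℝ) : ℂ) * Complex.I) *
          (Complex.cos ((((x : ℂ) + ((c : ℝ) : ℂ) * Complex.I) - ψ) / 2) /
            Complex.sin ((((x : ℂ) + ((c : ℝ) : ℂ) * Complex.I) - ψ) / 2)) := by
    apply intervalIntegral.integral_congr
    intro x _
    beta_reduce
    rw [hfldef]
    beta_reduce
    rw [Complex.cot_eq_cos_div_sin]
  have hval : AInt fl θ c = 4 * Real.pi * Complex.I * g (ψ : ℂ) := by
    rw [hAInt, k1, k2]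
    exact aux_rect_f g hg hgper θ ψ c hθψ hc
  rw [hval]
  have hgψ : g (ψ : ℂ) =
      Complex.exp ((r : ℂ) * (ρ : ℂ) * Complex.cos ((ψ : ℂ) - θ) / (2 * (t : ℂ))) := rfl
  rw [hgψ]
  have hexp : Complex.exp (-((r : ℂ) ^ 2 + (ρ : ℂ) ^ 2) / (4 * (t : ℂ))) *
      Complex.exp ((r : ℂ) * (ρ : ℂ) * Complex.cos ((ψ : ℂ) - θ) / (2 * (t : ℂ))) =
      Complex.exp (-((r : ℂ) ^ 2 + (ρ : ℂ) ^ 2 -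
        2 * (r : ℂ) * (ρ : ℂ) * ((Real.cos (θ - ψ) : ℝ) : ℂ)) / (4 * (t : ℂ))) := by
    rw [← Complex.exp_add]
    congr 1
    have hcos : ((Real.cos (θ - ψ) : ℝ) : ℂ) = Complex.cos ((ψ : ℂ) - θ) := by
      rw [Complex.ofReal_cos, ← Complex.cos_neg]
      congr 1
      push_cast
      ring
    rw [hcos]
    field_simp
    ring
  have hcoef : (1 : ℂ) / (16 * (Real.pi : ℂ) ^ 2 * Complex.I * (t : ℂ)) *
      (4 * Real.pi * Complex.I) = 1 / (4 * (Real.pi : ℂ) * (t : ℂ)) := by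
    have hI : Complex.I ≠ 0 := Complex.I_ne_zero
    rw [div_mul_eq_mul_div, one_mul, div_eq_div_iff (by simp [hπ0, ht0, hI, pow_eq_zero_iff] : (16 * (Real.pi : ℂ) ^ 2 * Complex.I * (t : ℂ)) ≠ 0) (by simp [hπ0, ht0] : (4 * (Real.pi : ℂ) * (t : ℂ)) ≠ 0)]
    ring
  calc (1 : ℂ) / (16 * (Real.pi : ℂ) ^ 2 * Complex.I * (t : ℂ)) *
        Complex.exp (-((r : ℂ) ^ 2 + (ρ : ℂ) ^ 2) / (4 * (t : ℂ))) *
        (4 * Real.pi * Complex.I *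
          Complex.exp ((r : ℂ) * (ρ : ℂ) * Complex.cos ((ψ : ℂ) - θ) / (2 * (t : ℂ))))
      = ((1 : ℂ) / (16 * (Real.pi : ℂ) ^ 2 * Complex.I * (t : ℂ)) *
          (4 * Real.pi * Complex.I)) *
        (Complex.exp (-((r : ℂ) ^ 2 + (ρ : ℂ) ^ 2) / (4 * (t : ℂ))) *
          Complex.exp ((r : ℂ) * (ρ : ℂ) * Complex.cos ((ψ : ℂ) - θ) / (2 * (t : ℂ)))) := by
        ring
    _ = 1 / (4 * (Real.pi : ℂ) * (t : ℂ)) *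
        Complex.exp (-((r : ℂ) ^ 2 + (ρ : ℂ) ^ 2 -
          2 * (r : ℂ) * (ρ : ℂ) * ((Real.cos (θ - ψ) : ℝ) : ℂ)) / (4 * (t : ℂ))) := by
        rw [hcoef, hexp]
end

section
/- Let b be a real number with b>−1, let U⊆ℂ be an open neighborhood of 0, and let g:U→ℂ be holomorphic with g(0)≠0. Then there exist an open neighborhood V⊆U of 0 and an injective holomorphic function w:V→ℂ with w(0)=0 and w′(0)≠0 such that |w(z)|^b·|w′(z)| = |g(z)|·|z|^b for all z∈V∖{0}. (Consequently, in the new holomorphic coordinate x=w(z) the flat conformal metric |g(z)|²|z|^{2b}|dz|² takes the normal form |x|^{2b}|dx|².) -/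
open MeasureTheory intervalIntegral Metric Set Complex

lemma aux_phi (b : ℝ) (hb : -1 < b) (U : Set ℂ) (hU : IsOpen U)
    (g : ℂ → ℂ) (hg : DifferentiableOn ℂ g U)
    (r : ℝ) (hr : 0 < r) (hrU : closedBall (0:ℂ) r ⊆ U) :
    ∃ φ ψ : ℂ → ℂ,
      (∀ z ∈ ball (0:ℂ) (r/2), HasDerivAt φ (ψ z) z) ∧
      (∀ z ∈ closedBall (0:ℂ) r, ((b+1 : ℝ) : ℂ) * φ z + ψ z * z = g z) := by
  have hb1 : (0:ℝ) < b + 1 := by linarith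
  -- membership
  have hmem : ∀ t : ℝ, t ∈ Set.Icc (0:ℝ) 1 → ∀ z ∈ closedBall (0:ℂ) r,
      ((t:ℂ) * z) ∈ closedBall (0:ℂ) r := by
    intro t ht z hz
    rw [mem_closedBall_zero_iff] at hz ⊢
    rw [norm_mul, Complex.norm_real, Real.norm_eq_abs, _root_.abs_of_nonneg ht.1]
    calc t * ‖z‖ ≤ 1 * r := by
          apply mul_le_mul ht.2 hz (norm_nonneg _) zero_le_one
      _ = r := one_mul r
  have hmemU : ∀ t : ℝ, t ∈ Set.Icc (0:ℝ) 1 → ∀ z ∈ closedBall (0:ℂ) r,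
      ((t:ℂ) * z) ∈ U := fun t ht z hz => hrU (hmem t ht z hz)
  -- continuity of deriv g on U
  have hdgc : ContinuousOn (deriv g) U := by
    have h1 : ContinuousOn (fun x => fderiv ℂ g x) U := fun x hx =>
      ((hg.analyticAt (hU.mem_nhds hx)).fderiv.continuousAt).continuousWithinAt
    have h2 : ContinuousOn (fun x => fderiv ℂ g x 1) U := h1.clm_apply continuousOn_const
    exact h2.congr fun x _ => (fderiv_apply_one_eq_deriv).symm
  -- bounds
  obtain ⟨M, hM⟩ := (isCompact_closedBall (0:ℂ) r).exists_bound_of_continuousOn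
    (hg.continuousOn.mono hrU)
  obtain ⟨M', hM'⟩ := (isCompact_closedBall (0:ℂ) r).exists_bound_of_continuousOn
    (hdgc.mono hrU)
  have hM'0 : 0 ≤ M' := (norm_nonneg _).trans (hM' 0 (mem_closedBall_self hr.le))
  -- measurability
  have hmeas : ∀ x ∈ closedBall (0:ℂ) r,
      AEStronglyMeasurable (fun t : ℝ => (t ^ b : ℝ) • g ((t:ℂ) * x))
        (volume.restrict (Set.uIoc (0:ℝ) 1)) := by
    intro x hx
    rw [uIoc_of_le (zero_le_one)]
    apply ContinuousOn.aestronglyMeasurable _ measurableSet_Ioc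
    have c1 : ContinuousOn (fun t:ℝ => t ^ b) (Ioc (0:ℝ) 1) := fun t ht =>
      (Real.continuousAt_rpow_const t b (Or.inl (ne_of_gt ht.1))).continuousWithinAt
    have c2 : ContinuousOn (fun t:ℝ => g ((t:ℂ)*x)) (Ioc (0:ℝ) 1) := by
      apply hg.continuousOn.comp
        ((Complex.continuous_ofReal.mul continuous_const).continuousOn)
      intro t ht
      exact hmemU t ⟨ht.1.le, ht.2⟩ x hx
    exact c1.smul c2
  have hmeas' : ∀ x ∈ closedBall (0:ℂ) r,
      AEStronglyMeasurable (fun t : ℝ => (t ^ (b+1) : ℝ) • deriv g ((t:ℂ) * x))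
        (volume.restrict (Set.uIoc (0:ℝ) 1)) := by
    intro x hx
    rw [uIoc_of_le (zero_le_one)]
    apply ContinuousOn.aestronglyMeasurable _ measurableSet_Ioc
    have c1 : ContinuousOn (fun t:ℝ => t ^ (b+1)) (Ioc (0:ℝ) 1) := fun t ht =>
      (Real.continuousAt_rpow_const t (b+1) (Or.inl (ne_of_gt ht.1))).continuousWithinAt
    have c2 : ContinuousOn (fun t:ℝ => deriv g ((t:ℂ)*x)) (Ioc (0:ℝ) 1) := by
      apply hdgc.comp
        ((Complex.continuous_ofReal.mul continuous_const).continuousOn)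
      intro t ht
      exact hmemU t ⟨ht.1.le, ht.2⟩ x hx
    exact c1.smul c2
  -- integrability
  have hFint : ∀ x ∈ closedBall (0:ℂ) r,
      IntervalIntegrable (fun t : ℝ => (t ^ b : ℝ) • g ((t:ℂ) * x)) volume 0 1 := by
    intro x hx
    have base : IntervalIntegrable (fun t : ℝ => M * t ^ b) volume 0 1 :=
      (intervalIntegral.intervalIntegrable_rpow' hb).const_mul M
    apply base.mono_fun (hmeas x hx)
    rw [uIoc_of_le (zero_le_one)]
    refine (ae_restrict_iff' measurableSet_Ioc).2 (Filter.Eventually.of_forall fun t ht => ?_)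
    show ‖(t ^ b : ℝ) • g ((t:ℂ) * x)‖ ≤ ‖M * t ^ b‖
    have htb : (0:ℝ) < t ^ b := Real.rpow_pos_of_pos ht.1 b
    rw [norm_smul, Real.norm_eq_abs, abs_of_pos htb, Real.norm_eq_abs]
    calc t ^ b * ‖g ((t:ℂ)*x)‖ ≤ t ^ b * M := by
          apply mul_le_mul_of_nonneg_left (hM _ (hmem t ⟨ht.1.le, ht.2⟩ x hx)) htb.le
      _ = M * t ^ b := mul_comm _ _
      _ ≤ |M * t ^ b| := le_abs_self _
  have hF'int : ∀ x ∈ closedBall (0:ℂ) r,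
      IntervalIntegrable (fun t : ℝ => (t ^ (b+1) : ℝ) • deriv g ((t:ℂ) * x)) volume 0 1 := by
    intro x hx
    have base : IntervalIntegrable (fun _ : ℝ => M') volume 0 1 := intervalIntegrable_const
    apply base.mono_fun (hmeas' x hx)
    rw [uIoc_of_le (zero_le_one)]
    refine (ae_restrict_iff' measurableSet_Ioc).2 (Filter.Eventually.of_forall fun t ht => ?_)
    show ‖(t ^ (b+1) : ℝ) • deriv g ((t:ℂ) * x)‖ ≤ ‖M'‖
    have htb : (0:ℝ) < t ^ (b+1) := Real.rpow_pos_of_pos ht.1 _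
    have htb1 : t ^ (b+1) ≤ 1 := Real.rpow_le_one ht.1.le ht.2 hb1.le
    rw [norm_smul, Real.norm_eq_abs, abs_of_pos htb, Real.norm_eq_abs, _root_.abs_of_nonneg hM'0]
    calc t ^ (b+1) * ‖deriv g ((t:ℂ)*x)‖ ≤ 1 * M' := by
          apply mul_le_mul htb1 (hM' _ (hmem t ⟨ht.1.le, ht.2⟩ x hx)) (norm_nonneg _) zero_le_one
      _ = M' := one_mul M'
  refine ⟨fun z => ∫ t in (0:ℝ)..1, (t ^ b : ℝ) • g ((t:ℂ) * z),
        fun z => ∫ t in (0:ℝ)..1, (t ^ (b+1) : ℝ) • deriv g ((t:ℂ) * z), ?_, ?_⟩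
  · -- differentiation under the integral sign
    intro z₀ hz₀
    have hball : ball z₀ (r/2) ⊆ closedBall (0:ℂ) r := by
      intro x hx
      rw [mem_ball] at hx
      rw [mem_ball, dist_zero_right] at hz₀
      rw [mem_closedBall_zero_iff]
      calc ‖x‖ = dist x 0 := (dist_zero_right x).symm
        _ ≤ dist x z₀ + dist z₀ 0 := dist_triangle _ _ _
        _ ≤ r/2 + r/2 := add_le_add hx.le (by simpa [dist_zero_right] using hz₀.le)
        _ = r := by ring
    have hz₀' : z₀ ∈ closedBall (0:ℂ) r :=
      hball (mem_ball_self (half_pos hr))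
    have key := intervalIntegral.hasDerivAt_integral_of_dominated_loc_of_deriv_le
      (𝕜 := ℂ) (μ := volume) (a := 0) (b := 1)
      (F := fun z t => (t ^ b : ℝ) • g ((t:ℂ) * z))
      (F' := fun z t => (t ^ (b+1) : ℝ) • deriv g ((t:ℂ) * z))
      (x₀ := z₀) (bound := fun _ => M') (ball_mem_nhds z₀ (half_pos hr))
      ?_ (hFint z₀ hz₀') (hmeas' z₀ hz₀') ?_ intervalIntegrable_const ?_
    · exact key.2
    · -- eventual measurability
      have : ball (0:ℂ) r ∈ nhds z₀ := by
        apply Metric.isOpen_ball.mem_nhds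
        rw [mem_ball, dist_zero_right] at hz₀ ⊢
        linarith
      filter_upwards [this] with x hx
      exact hmeas x (ball_subset_closedBall hx)
    · -- bound
      filter_upwards with t ht x hx
      have hxr : x ∈ closedBall (0:ℂ) r := hball hx
      rw [uIoc_of_le (zero_le_one)] at ht
      have htb : (0:ℝ) < t ^ (b+1) := Real.rpow_pos_of_pos ht.1 _
      have htb1 : t ^ (b+1) ≤ 1 := Real.rpow_le_one ht.1.le ht.2 hb1.le
      rw [norm_smul, Real.norm_eq_abs, abs_of_pos htb]
      calc t ^ (b+1) * ‖deriv g ((t:ℂ)*x)‖ ≤ 1 * M' := by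
            apply mul_le_mul htb1 (hM' _ (hmem t ⟨ht.1.le, ht.2⟩ x hxr)) (norm_nonneg _)
              zero_le_one
        _ = M' := one_mul M'
    · -- differentiability in the parameter
      filter_upwards with t ht x hx
      rw [uIoc_of_le (zero_le_one)] at ht
      have hxr : x ∈ closedBall (0:ℂ) r := hball hx
      have hga : DifferentiableAt ℂ g ((t:ℂ)*x) :=
        hg.differentiableAt (hU.mem_nhds (hmemU t ⟨ht.1.le, ht.2⟩ x hxr))
      have inner : HasDerivAt (fun y : ℂ => (t:ℂ) * y) ((t:ℂ) * 1) x :=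
        (hasDerivAt_id x).const_mul (t:ℂ)
      have comp : HasDerivAt (fun y : ℂ => g ((t:ℂ) * y))
          (deriv g ((t:ℂ)*x) * ((t:ℂ) * 1)) x := by
        exact (hga.hasDerivAt.comp x inner)
      have := comp.const_smul ((t:ℝ) ^ b)
      convert this using 1
      · rfl
      rw [mul_one]
      rw [Complex.real_smul, Complex.real_smul, Real.rpow_add_one (ne_of_gt ht.1)]
      push_cast
      ring
  · -- the ODE identity, via FTC
    intro z hz
    set Φ : ℝ → ℂ := fun t => (t ^ (b+1) : ℝ) • g ((t:ℂ)*z) with hΦ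
    have hcont : ContinuousOn Φ (Icc (0:ℝ) 1) := by
      have c1 : ContinuousOn (fun t:ℝ => t ^ (b+1)) (Icc (0:ℝ) 1) := fun t _ =>
        (Real.continuousAt_rpow_const t (b+1) (Or.inr hb1.le)).continuousWithinAt
      have c2 : ContinuousOn (fun t:ℝ => g ((t:ℂ)*z)) (Icc (0:ℝ) 1) := by
        apply hg.continuousOn.comp
          ((Complex.continuous_ofReal.mul continuous_const).continuousOn)
        intro t ht
        exact hmemU t ht z hz
      exact c1.smul c2
    have hderiv : ∀ t ∈ Ioo (0:ℝ) 1, HasDerivWithinAt Φ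
        (((b+1):ℝ) • ((t ^ b : ℝ) • g ((t:ℂ)*z))
          + ((t ^ (b+1) : ℝ) • deriv g ((t:ℂ)*z)) * z) (Ioi t) t := by
      intro t ht
      have hga : DifferentiableAt ℂ g ((t:ℂ)*z) :=
        hg.differentiableAt (hU.mem_nhds (hmemU t ⟨ht.1.le, ht.2.le⟩ z hz))
      have h1 : HasDerivAt (fun s:ℝ => s ^ (b+1)) ((b+1) * t ^ b) t := by
        have := Real.hasDerivAt_rpow_const (x := t) (p := b+1) (Or.inl (ne_of_gt ht.1))
        simpa using this
      have h2c : HasDerivAt (fun w : ℂ => g (w * z)) (deriv g ((t:ℂ)*z) * (1 * z)) (t:ℂ) :=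
        HasDerivAt.comp ((t:ℂ)) hga.hasDerivAt ((hasDerivAt_id ((t:ℂ))).mul_const z)
      have h2 : HasDerivAt (fun s:ℝ => g ((s:ℂ)*z)) (deriv g ((t:ℂ)*z) * (1 * z)) t :=
        h2c.comp_ofReal
      have := h1.smul h2
      apply HasDerivAt.hasDerivWithinAt
      convert this using 1
      · rfl
      simp only [Complex.real_smul, one_mul]
      push_cast
      ring
    have int1 : IntervalIntegrable (fun t => ((b+1):ℝ) • ((t ^ b : ℝ) • g ((t:ℂ)*z)))
        volume 0 1 := (hFint z hz).smul ((b+1):ℝ)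
    have int2 : IntervalIntegrable (fun t => ((t ^ (b+1) : ℝ) • deriv g ((t:ℂ)*z)) * z)
        volume 0 1 := (hF'int z hz).mul_const z
    have hint : IntervalIntegrable (fun t => ((b+1):ℝ) • ((t ^ b : ℝ) • g ((t:ℂ)*z))
        + ((t ^ (b+1) : ℝ) • deriv g ((t:ℂ)*z)) * z) volume 0 1 := int1.add int2
    have key := intervalIntegral.integral_eq_sub_of_hasDeriv_right_of_le zero_le_one
      hcont hderiv hint
    rw [intervalIntegral.integral_add int1 int2, intervalIntegral.integral_smul,
      intervalIntegral.integral_mul_const] at key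
    have hΦ1 : Φ 1 = g z := by
      simp [hΦ, Real.one_rpow]
    have hΦ0 : Φ 0 = 0 := by
      simp [hΦ, Real.zero_rpow (ne_of_gt hb1)]
    rw [hΦ1, hΦ0, sub_zero] at key
    rw [← key, Complex.real_smul]

/-- existence of a distinguished local parameter for a flat conformal metric
with a conical singularity of order `b > −1`: if `g` is holomorphic near `0` with
`g(0) ≠ 0`, then there is an injective holomorphic change of coordinate `w` near `0` with
`w(0) = 0`, `w'(0) ≠ 0` and `|w(z)|^b |w'(z)| = |g(z)| |z|^b` for `z ≠ 0`, i.e. in the new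
coordinate `x = w(z)` the metric `|g(z)|²|z|^{2b}|dz|²` becomes `|x|^{2b}|dx|²`. -/
theorem stmt_12 (b : ℝ) (hb : -1 < b) (U : Set ℂ) (hU : IsOpen U) (h0 : (0 : ℂ) ∈ U)
    (g : ℂ → ℂ) (hg : DifferentiableOn ℂ g U) (hg0 : g 0 ≠ 0) :
    ∃ V : Set ℂ, V ⊆ U ∧ IsOpen V ∧ (0 : ℂ) ∈ V ∧
      ∃ w : ℂ → ℂ, DifferentiableOn ℂ w V ∧ Set.InjOn w V ∧ w 0 = 0 ∧ deriv w 0 ≠ 0 ∧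
        ∀ z ∈ V, z ≠ 0 →
          ‖w z‖ ^ b * ‖deriv w z‖ =
            ‖g z‖ * ‖z‖ ^ b := by
  obtain ⟨r, hr0, hrU⟩ : ∃ r > 0, closedBall (0:ℂ) r ⊆ U := by
    rcases Metric.nhds_basis_closedBall.mem_iff.1 (hU.mem_nhds h0) with ⟨r, hr, h⟩
    exact ⟨r, hr, h⟩
  obtain ⟨φ, ψ, hφψ, hode⟩ := aux_phi b hb U hU g hg r hr0 hrU
  have hb1 : (0:ℝ) < b + 1 := by linarith
  set β : ℂ := ((b + 1 : ℝ) : ℂ) with hβ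
  have hβ0 : β ≠ 0 := by
    rw [hβ]
    exact_mod_cast ne_of_gt hb1
  have hP0 : β * φ 0 = g 0 := by
    have := hode 0 (mem_closedBall_self hr0.le)
    simpa using this
  set Q : ℂ → ℂ := fun z => (β * φ z) / g 0 with hQdef
  have hQc : ContinuousAt Q 0 := by
    have h0' : (0:ℂ) ∈ ball (0:ℂ) (r/2) := mem_ball_self (half_pos hr0)
    have hc := (hφψ 0 h0').differentiableAt.continuousAt
    exact (continuousAt_const.mul hc).div_const _
  have hQ0 : Q 0 = 1 := by
    rw [hQdef]
    simp only [hP0]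
    exact div_self hg0
  obtain ⟨ρ, hρ0, hρsub, hρQ⟩ : ∃ ρ > 0, ball (0:ℂ) ρ ⊆ ball (0:ℂ) (r/2) ∧
      ∀ z ∈ ball (0:ℂ) ρ, Q z ∈ ball (1:ℂ) (1/2) := by
    obtain ⟨δ, hδ0, hδ⟩ := Metric.continuousAt_iff.1 hQc (1/2) one_half_pos
    refine ⟨min δ (r/2), lt_min hδ0 (half_pos hr0), ?_, ?_⟩
    · exact ball_subset_ball (min_le_right _ _)
    · intro z hz
      rw [mem_ball] at hz ⊢
      have := hδ (lt_of_lt_of_le hz (min_le_left _ _))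
      rwa [hQ0] at this
  have hball1 : ∀ x : ℂ, x ∈ ball (1:ℂ) (1/2) → 0 < x.re := by
    intro x hx
    rw [mem_ball, Complex.dist_eq] at hx
    have h1 : |(x - 1).re| ≤ ‖x - 1‖ := Complex.abs_re_le_norm _
    have h2 : (x - 1).re = x.re - 1 := by simp
    have h3 := (abs_le.1 (h1.trans hx.le)).1
    rw [h2] at h3
    linarith
  have hsub2 : ball (0:ℂ) ρ ⊆ closedBall (0:ℂ) r :=
    hρsub.trans (ball_subset_closedBall.trans (closedBall_subset_closedBall (by linarith)))
  have hQsP : ∀ z ∈ ball (0:ℂ) ρ, Q z ∈ Complex.slitPlane := fun z hz =>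
    Complex.mem_slitPlane_iff.2 (Or.inl (hball1 _ (hρQ z hz)))
  have hQne : ∀ z ∈ ball (0:ℂ) ρ, Q z ≠ 0 := by
    intro z hz h
    have := hball1 _ (hρQ z hz)
    rw [h] at this
    simp at this
  have hPne : ∀ z ∈ ball (0:ℂ) ρ, β * φ z ≠ 0 := by
    intro z hz h
    apply hQne z hz
    rw [hQdef]
    simp [h]
  set κ : ℝ := ‖g 0‖ ^ ((b+1)⁻¹) with hκ
  have hκpos : 0 < κ := Real.rpow_pos_of_pos (norm_pos_iff.mpr hg0) _
  set u : ℂ → ℂ := fun z => (κ:ℝ) • Complex.exp (β⁻¹ * Complex.log (Q z)) with hu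
  set w : ℂ → ℂ := fun z => z * u z with hw
  have huderiv : ∀ z ∈ ball (0:ℂ) ρ,
      HasDerivAt u (u z * (β⁻¹ * ((β * ψ z / g 0) / Q z))) z := by
    intro z hz
    have hφ' := hφψ z (hρsub hz)
    have hP' : HasDerivAt (fun z => β * φ z) (β * ψ z) z := hφ'.const_mul β
    have hQ' : HasDerivAt Q (β * ψ z / g 0) z := hP'.div_const _
    have hL' : HasDerivAt (fun z => Complex.log (Q z)) ((β * ψ z / g 0) / Q z) z :=
      hQ'.clog (hQsP z hz)
    have hE' := (hL'.const_mul β⁻¹).cexp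
    have := hE'.const_smul κ
    convert this using 1
    · rfl
    · rfl
    · rfl
    rw [hu]
    simp only [smul_mul_assoc]
  have hwderiv : ∀ z ∈ ball (0:ℂ) ρ,
      HasDerivAt w (u z + z * (u z * (β⁻¹ * ((β * ψ z / g 0) / Q z)))) z := by
    intro z hz
    have := (hasDerivAt_id z).mul (huderiv z hz)
    simpa [hw, Pi.mul_def] using this
  have huz0 : ∀ z, u z ≠ 0 := fun z =>
    smul_ne_zero (ne_of_gt hκpos) (Complex.exp_ne_zero _)
  have hwd0 : HasDerivAt w (u 0) 0 := by
    have := hwderiv 0 (mem_ball_self hρ0)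
    simpa using this
  have hderivw0 : deriv w 0 = u 0 := hwd0.deriv
  have hwdiff : DifferentiableOn ℂ w (ball (0:ℂ) ρ) := fun z hz =>
    ((hwderiv z hz).differentiableAt).differentiableWithinAt
  have hwan : AnalyticAt ℂ w 0 := hwdiff.analyticAt (isOpen_ball.mem_nhds (mem_ball_self hρ0))
  have hstrict : HasStrictDerivAt w (u 0) 0 := by
    have h1 := hwan.hasStrictFDerivAt
    have h2 : HasStrictDerivAt w (fderiv ℂ w 0 1) 0 := h1.hasStrictDerivAt
    rwa [fderiv_apply_one_eq_deriv, hderivw0] at h2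
  have hsf := hstrict.hasStrictFDerivAt_equiv (huz0 0)
  set PH := HasStrictFDerivAt.toOpenPartialHomeomorph w hsf with hPH
  have hsource : (0:ℂ) ∈ PH.source := hsf.mem_toOpenPartialHomeomorph_source
  refine ⟨ball (0:ℂ) ρ ∩ PH.source, ?_, (isOpen_ball.inter PH.open_source), 
    ⟨mem_ball_self hρ0, hsource⟩, w, hwdiff.mono inter_subset_left, ?_, by simp [hw], ?_, ?_⟩
  · exact (inter_subset_left.trans (hsub2.trans hrU))
  · have : Set.InjOn w PH.source := PH.injOn
    exact this.mono inter_subset_right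
  · rw [hderivw0]; exact huz0 0
  · intro z hz hz0
    have hzρ : z ∈ ball (0:ℂ) ρ := hz.1
    -- simplify the derivative
    have hgeq : β * φ z + ψ z * z = g z := hode z (hsub2 hzρ)
    have hQz : Q z = (β * φ z) / g 0 := rfl
    have hsimp : β⁻¹ * ((β * ψ z / g 0) / Q z) = ψ z / (β * φ z) := by
      rw [hQz]
      field_simp
    have hderivwz : deriv w z = u z * (g z / (β * φ z)) := by
      rw [(hwderiv z hzρ).deriv, hsimp]
      have hP := hPne z hzρ
      have hφz : φ z ≠ 0 := right_ne_zero_of_mul hP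
      field_simp
      rw [← hgeq]
      ring
    -- absolute values
    have habsu : ‖u z‖ ^ (b+1) = ‖β * φ z‖ := by
      have h1 : ‖u z‖ = κ * Real.exp ((b+1)⁻¹ * (Complex.log (Q z)).re) := by
        rw [hu]
        simp only [Complex.real_smul, norm_mul, Complex.norm_real, Real.norm_eq_abs,
          _root_.abs_of_nonneg hκpos.le, Complex.norm_exp]
        congr 2
        rw [hβ, ← Complex.ofReal_inv, Complex.re_ofReal_mul]
      rw [h1, Real.mul_rpow hκpos.le (Real.exp_pos _).le]
      have h2 : κ ^ (b+1) = ‖g 0‖ := by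
        rw [hκ, ← Real.rpow_mul (norm_nonneg _), inv_mul_cancel₀ hb1.ne',
          Real.rpow_one]
      have h3 : Real.exp ((b+1)⁻¹ * (Complex.log (Q z)).re) ^ (b+1)
          = ‖Q z‖ := by
        rw [← Real.exp_mul]
        have : (b+1)⁻¹ * (Complex.log (Q z)).re * (b+1) = (Complex.log (Q z)).re := by
          field_simp
        rw [this, Complex.log_re, Real.exp_log (norm_pos_iff.mpr (hQne z hzρ))]
      rw [h2, h3, hQz, norm_div]
      rw [mul_div_cancel₀ _ (norm_ne_zero_iff.mpr hg0)]
    have hBu0 : ‖u z‖ ≠ 0 := norm_ne_zero_iff.mpr (huz0 z)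
    have hC0 : ‖β * φ z‖ ≠ 0 := norm_ne_zero_iff.mpr (hPne z hzρ)
    rw [hderivwz]
    have hwz : w z = z * u z := rfl
    rw [hwz, norm_mul, norm_mul, norm_div]
    rw [Real.mul_rpow (norm_nonneg _) (norm_nonneg _)]
    have hstep : ‖z‖ ^ b * ‖u z‖ ^ b *
        (‖u z‖ * (‖g z‖ / ‖β * φ z‖))
        = ‖z‖ ^ b * (‖u z‖ ^ b * ‖u z‖) *
          (‖g z‖ / ‖β * φ z‖) := by ring
    rw [hstep, ← Real.rpow_add_one hBu0 b, habsu]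
    have hφa : φ z ≠ 0 := fun h => hPne z hzρ (by rw [h, mul_zero])
    have hβa : ‖β‖ ≠ 0 := norm_ne_zero_iff.mpr hβ0
    have hφa' : ‖φ z‖ ≠ 0 := norm_ne_zero_iff.mpr hφa
    field_simp
end
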